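/- arXiv:2102.04398 — 6 statements merged into one kernel-verified Lean document; each statement's English description precedes it below -/
import Mathlib

section
/- Let χ: ℝ⁺ → ℝ be a kernel, let f: ℝ⁺ → ℝ be a bounded measurable function, let t ∈ ℝ⁺ be such that the one-sided limits f(t+0) = lim_{y→0⁺} f(t+y) and f(t−0) = lim_{y→0⁺} f(t−y) exist and are finite, and let w > 0 be such that w·log t ∈ ℤ. Define h_t: ℝ⁺ → ℝ by h_t(x) = f(x) − f(t−0) if x < t, h_t(x) = f(x) − f(t+0) if x > t, and h_t(t) = 0. Then (I_w^χ f)(t) = (I_w^χ h_t)(t) + f(t−0) + (χ(1) + ψ_χ⁻(t^w))·(f(t+0) − f(t−0)). -/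
open Real MeasureTheory Filter Set

/-- The Kantorovich exponential sampling series
`(I_w^χ f)(x) = ∑_{k∈ℤ} χ(e^{−k} x^w) · w ∫_{k/w}^{(k+1)/w} f(e^u) du`. -/
noncomputable def kanto (χ f : ℝ → ℝ) (w x : ℝ) : ℝ :=
  ∑' k : ℤ, χ (Real.exp (-(k : ℝ)) * x ^ w) *
    (w * ∫ u in ((k : ℝ) / w)..(((k : ℝ) + 1) / w), f (Real.exp u))

/-- The absolute moment of order ν:
`M_ν(χ) = sup_{u∈ℝ⁺} ∑_{k∈ℤ} |χ(e^{−k}u)|·|k − log u|^ν`, valued in `[0,∞]`. -/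
noncomputable def absMoment (χ : ℝ → ℝ) (ν : ℝ) : ENNReal :=
  ⨆ u : {x : ℝ // 0 < x}, ∑' k : ℤ,
    ENNReal.ofReal (|χ (Real.exp (-(k : ℝ)) * u.1)| * |(k : ℝ) - Real.log u.1| ^ ν)

/-- χ : ℝ⁺ → ℝ is a kernel: (i) integrable on ℝ⁺ and bounded on [1/e, e];
(ii) ∑_{k∈ℤ} χ(e^{−k}u) = 1 for all u > 0; (iii) M_ν(χ) < ∞ for some ν > 0. -/
structure IsKernel (χ : ℝ → ℝ) : Prop where
  integrable : IntegrableOn χ (Ioi 0)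
  bounded : ∃ C, ∀ u ∈ Icc (Real.exp (-1)) (Real.exp 1), |χ u| ≤ C
  partition : ∀ u : ℝ, 0 < u → HasSum (fun k : ℤ => χ (Real.exp (-(k : ℝ)) * u)) 1
  moment : ∃ ν > 0, absMoment χ ν < ⊤

/-- `ψ_χ⁻(u) = ∑_{k > log u} χ(u e^{−k})`. -/
noncomputable def psiMinus (χ : ℝ → ℝ) (u : ℝ) : ℝ :=
  ∑' k : {k : ℤ // Real.log u < (k : ℝ)}, χ (u * Real.exp (-(k.1 : ℝ)))

/-- `ψ_χ⁺(u) = ∑_{k < log u} χ(u e^{−k})`. -/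
noncomputable def psiPlus (χ : ℝ → ℝ) (u : ℝ) : ℝ :=
  ∑' k : {k : ℤ // (k : ℝ) < Real.log u}, χ (u * Real.exp (-(k.1 : ℝ)))

/-- Representation lemma for `I_w^χ f` at a point `t` when `w·log t ∈ ℤ`. -/
theorem representation_lemma_integral_case
    (χ f : ℝ → ℝ) (hχ : IsKernel χ) (hf : Measurable f)
    (hfb : ∃ C, ∀ x : ℝ, 0 < x → |f x| ≤ C)
    (t : ℝ) (ht : 0 < t) (fp fm : ℝ)
    (hplus : Tendsto f (nhdsWithin t (Ioi t)) (nhds fp))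
    (hminus : Tendsto f (nhdsWithin t (Iio t)) (nhds fm))
    (w : ℝ) (hw : 0 < w) (hwz : ∃ k : ℤ, w * Real.log t = (k : ℝ)) :
    kanto χ f w t =
      kanto χ (fun x => if x < t then f x - fm else if t < x then f x - fp else 0) w t
      + fm + (χ 1 + psiMinus χ (t ^ w)) * (fp - fm) := by
  classical
  obtain ⟨n, hn⟩ := hwz
  obtain ⟨C, hC⟩ := hfb
  set h : ℝ → ℝ := fun x => if x < t then f x - fm else if t < x then f x - fp else 0 with hh
  have htw : t ^ w = Real.exp n := by
    rw [Real.rpow_def_of_pos ht, mul_comm, hn]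
  have hlogtw : Real.log (t ^ w) = (n : ℝ) := by rw [htw, Real.log_exp]
  have hlogt : Real.log t = (n : ℝ) / w := by
    field_simp
    linarith [hn]
  set g : ℤ → ℝ := fun k => χ (Real.exp (-(k : ℝ)) * t ^ w) with hg
  -- summability of g
  have hgsum : HasSum g 1 := hχ.partition (t ^ w) (Real.rpow_pos_of_pos ht w)
  have hgs : Summable g := hgsum.summable
  have hgabs : Summable fun k => |g k| := summable_abs_iff.mpr hgs
  -- boundedness and measurability of h
  set D : ℝ := C + (|fm| + |fp|) with hD
  have hhb : ∀ x : ℝ, 0 < x → |h x| ≤ D := by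
    intro x hx
    simp only [hh]
    split_ifs with h1 h2
    · calc |f x - fm| ≤ |f x| + |fm| := abs_sub _ _
        _ ≤ D := by have := hC x hx; have := abs_nonneg fp; simp only [hD]; linarith
    · calc |f x - fp| ≤ |f x| + |fp| := abs_sub _ _
        _ ≤ D := by have := hC x hx; have := abs_nonneg fm; simp only [hD]; linarith
    · have : (0:ℝ) ≤ D := by
        have := hC x hx; have := abs_nonneg (f x); have := abs_nonneg fm
        have := abs_nonneg fp; simp only [hD]; linarith
      simpa using this
  have hhm : Measurable h := by
    apply Measurable.ite (measurableSet_lt measurable_id measurable_const)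
      (hf.sub measurable_const)
    exact Measurable.ite (measurableSet_lt measurable_const measurable_id)
      (hf.sub measurable_const) measurable_const
  -- interval integrability of h ∘ exp
  have hint : ∀ a b : ℝ, IntervalIntegrable (fun u => h (Real.exp u)) volume a b := by
    intro a b
    rw [intervalIntegrable_iff]
    refine Measure.integrableOn_of_bounded (M := D) ?_ ?_ ?_
    · exact (measure_Ioc_lt_top).ne
    · exact (hhm.comp Real.measurable_exp).aestronglyMeasurable
    · filter_upwards with u
      simpa using hhb _ (Real.exp_pos u)
  -- key integral identity
  set c : ℤ → ℝ := fun k => if n ≤ k then fp else fm with hc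
  have key : ∀ k : ℤ, (w * ∫ u in ((k : ℝ) / w)..(((k : ℝ) + 1) / w), f (Real.exp u))
      = (w * ∫ u in ((k : ℝ) / w)..(((k : ℝ) + 1) / w), h (Real.exp u)) + c k := by
    intro k
    have hklt : (k : ℝ) / w < ((k : ℝ) + 1) / w := by
      gcongr
      linarith
    have huIoc : Set.uIoc ((k : ℝ) / w) (((k : ℝ) + 1) / w) = Ioc ((k : ℝ) / w) (((k : ℝ) + 1) / w) :=
      uIoc_of_le hklt.le
    have hae : ∀ᵐ u : ℝ, u ∈ Set.uIoc ((k : ℝ) / w) (((k : ℝ) + 1) / w) →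
        f (Real.exp u) = h (Real.exp u) + c k := by
      have h0 : ∀ᵐ u : ℝ, u ≠ Real.log t := by
        rw [ae_iff]
        have he : {u : ℝ | ¬u ≠ Real.log t} = {Real.log t} := by ext u; simp
        rw [he]
        exact measure_singleton _
      filter_upwards [h0] with u hu hmem
      rw [huIoc, mem_Ioc] at hmem
      by_cases hk : n ≤ k
      · have h1 : Real.log t ≤ (k : ℝ) / w := by
          rw [hlogt]
          gcongr
        have h2 : t < Real.exp u := by
          rw [← Real.exp_log ht]
          exact Real.exp_lt_exp.mpr (lt_of_le_of_lt h1 hmem.1)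
        simp only [hh, hc, if_neg (not_lt.mpr h2.le), if_pos h2, if_pos hk]
        ring
      · have hk' : (k : ℝ) + 1 ≤ (n : ℝ) := by
          have : k + 1 ≤ n := by omega
          exact_mod_cast this
        have h1 : ((k : ℝ) + 1) / w ≤ Real.log t := by
          rw [hlogt]
          gcongr
        have h2 : u < Real.log t := lt_of_le_of_ne (le_trans hmem.2 h1) hu
        have h3 : Real.exp u < t := by
          rw [← Real.exp_log ht]
          exact Real.exp_lt_exp.mpr h2
        simp only [hh, hc, if_pos h3, if_neg hk]
        ring
    rw [intervalIntegral.integral_congr_ae hae,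
        intervalIntegral.integral_add (hint _ _) intervalIntegrable_const,
        intervalIntegral.integral_const, smul_eq_mul]
    have hlen : ((k : ℝ) + 1) / w - (k : ℝ) / w = 1 / w := by
      field_simp
      ring
    rw [hlen, mul_add]
    congr 1
    field_simp
  -- bound on the h-integrals
  set I : ℤ → ℝ := fun k => w * ∫ u in ((k : ℝ) / w)..(((k : ℝ) + 1) / w), h (Real.exp u)
    with hIdef
  have habs_int : ∀ k : ℤ, |I k| ≤ D := by
    intro k
    have hb : ∀ u ∈ Set.uIoc ((k : ℝ) / w) (((k : ℝ) + 1) / w), ‖h (Real.exp u)‖ ≤ D := fun u _ => by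
      simpa using hhb _ (Real.exp_pos u)
    have h1 := intervalIntegral.norm_integral_le_of_norm_le_const hb
    have hlen : |((k : ℝ) + 1) / w - (k : ℝ) / w| = 1 / w := by
      rw [show ((k : ℝ) + 1) / w - (k : ℝ) / w = 1 / w by field_simp; ring]
      rw [abs_of_pos (by positivity)]
    rw [hlen] at h1
    simp only [hIdef, abs_mul, abs_of_pos hw]
    calc w * |∫ u in ((k : ℝ) / w)..(((k : ℝ) + 1) / w), h (Real.exp u)|
        ≤ w * (D * (1 / w)) := by
          apply mul_le_mul_of_nonneg_left _ hw.le
          simpa using h1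
      _ = D := by field_simp
  -- summability
  have hs1 : Summable fun k => g k * I k := by
    apply Summable.of_norm_bounded (hgabs.mul_right D)
    intro k
    rw [Real.norm_eq_abs, abs_mul]
    exact mul_le_mul_of_nonneg_left (habs_int k) (abs_nonneg _)
  have hcb : ∀ k : ℤ, |c k| ≤ |fp| + |fm| := by
    intro k
    simp only [hc]
    split_ifs
    · linarith [abs_nonneg fm]
    · linarith [abs_nonneg fp]
  have hs2 : Summable fun k => g k * c k := by
    apply Summable.of_norm_bounded (hgabs.mul_right (|fp| + |fm|))
    intro k
    rw [Real.norm_eq_abs, abs_mul]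
    exact mul_le_mul_of_nonneg_left (hcb k) (abs_nonneg _)
  have expand : kanto χ f w t = (∑' k, g k * I k) + ∑' k, g k * c k := by
    rw [kanto, ← Summable.tsum_add hs1 hs2]
    exact tsum_congr fun k => by rw [key k]; ring
  -- computing the constant part
  have hind' : Summable fun k : ℤ => if n ≤ k then g k else 0 := by
    apply Summable.of_norm_bounded hgabs
    intro k
    split_ifs <;> simp [abs_nonneg]
  have hgn : g n = χ 1 := by
    simp only [hg]
    rw [htw, ← Real.exp_add]
    norm_num
  have e3 : (∑' k : ℤ, if n < k then g k else 0) = psiMinus χ (t ^ w) := by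
    rw [psiMinus, show (∑' k : {k : ℤ // Real.log (t ^ w) < (k : ℝ)},
          χ (t ^ w * Real.exp (-(k.1 : ℝ))))
        = ∑' k : ({k : ℤ | Real.log (t ^ w) < (k : ℝ)} : Set ℤ),
          χ (t ^ w * Real.exp (-(k.1 : ℝ))) from rfl,
      tsum_subtype ({k : ℤ | Real.log (t ^ w) < (k : ℝ)})
        (fun k : ℤ => χ (t ^ w * Real.exp (-(k : ℝ))))]
    refine tsum_congr fun k => ?_
    rw [Set.indicator_apply]
    simp only [mem_setOf_eq, hlogtw, Int.cast_lt]
    split_ifs with hk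
    · simp only [hg]
      rw [mul_comm]
    · rfl
  have split : (∑' k : ℤ, if n ≤ k then g k else 0) = χ 1 + psiMinus χ (t ^ w) := by
    rw [Summable.tsum_eq_add_tsum_ite hind' n, if_pos le_rfl, hgn]
    congr 1
    rw [← e3]
    apply tsum_congr
    intro k
    by_cases h1 : k = n
    · subst h1
      simp
    · by_cases h2 : n ≤ k
      · have h3 : n < k := lt_of_le_of_ne h2 (Ne.symm h1)
        simp [h1, h2, h3]
      · have h3 : ¬ n < k := fun hx => h2 hx.le
        simp [h1, h2, h3]
  have hcs : (∑' k, g k * c k) = fm + (χ 1 + psiMinus χ (t ^ w)) * (fp - fm) := by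
    have e1 : ∀ k : ℤ, g k * c k = fm * g k + (fp - fm) * (if n ≤ k then g k else 0) := by
      intro k
      simp only [hc]
      split_ifs <;> ring
    rw [tsum_congr e1, Summable.tsum_add (hgs.mul_left fm) (hind'.mul_left (fp - fm)),
        tsum_mul_left, tsum_mul_left, hgsum.tsum_eq, split]
    ring
  rw [expand, hcs]
  have hk : (∑' k, g k * I k) = kanto χ h w t := rfl
  rw [hk]
  ring
end

section
/- Let χ: ℝ⁺ → ℝ be a kernel and let f: ℝ⁺ → ℝ be a bounded measurable function. If f is continuous at a point t ∈ ℝ⁺, then (I_w^χ f)(t) → f(t) as w → ∞. -/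
open Real MeasureTheory Filter Set

private lemma moment_tsum_le (χ : ℝ → ℝ) (ν u : ℝ) (hu : 0 < u) :
    ∑' k : ℤ, ENNReal.ofReal (|χ (Real.exp (-(k : ℝ)) * u)| * |(k : ℝ) - Real.log u| ^ ν)
      ≤ absMoment χ ν :=
  le_iSup (fun v : {x : ℝ // 0 < x} => ∑' k : ℤ,
    ENNReal.ofReal (|χ (Real.exp (-(k : ℝ)) * v.1)| * |(k : ℝ) - Real.log v.1| ^ ν))
    (⟨u, hu⟩ : {x : ℝ // 0 < x})

private lemma G_summable (χ : ℝ → ℝ) {ν : ℝ} (hM : absMoment χ ν < ⊤) {u : ℝ} (hu : 0 < u) :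
    Summable (fun k : ℤ => |χ (Real.exp (-(k : ℝ)) * u)| * |(k : ℝ) - Real.log u| ^ ν) := by
  have h := (moment_tsum_le χ ν u hu).trans_lt hM
  have h2 := ENNReal.summable_toReal h.ne
  refine h2.congr fun k => ?_
  rw [ENNReal.toReal_ofReal (by positivity)]

private lemma G_tsum_le (χ : ℝ → ℝ) {ν : ℝ} (hM : absMoment χ ν < ⊤) {u : ℝ} (hu : 0 < u) :
    ∑' k : ℤ, |χ (Real.exp (-(k : ℝ)) * u)| * |(k : ℝ) - Real.log u| ^ ν
      ≤ (absMoment χ ν).toReal := by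
  have h := moment_tsum_le χ ν u hu
  have he : (∑' k : ℤ, ENNReal.ofReal
      (|χ (Real.exp (-(k : ℝ)) * u)| * |(k : ℝ) - Real.log u| ^ ν)).toReal
      = ∑' k : ℤ, |χ (Real.exp (-(k : ℝ)) * u)| * |(k : ℝ) - Real.log u| ^ ν := by
    rw [ENNReal.tsum_toReal_eq (fun k => ENNReal.ofReal_ne_top)]
    exact tsum_congr fun k => ENNReal.toReal_ofReal (by positivity)
  rw [← he]
  exact ENNReal.toReal_mono hM.ne h

private lemma chi_pt_bound (χ : ℝ → ℝ) {ν : ℝ} (hν : 0 < ν) {Cb : ℝ}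
    (hCb : ∀ u ∈ Icc (Real.exp (-1)) (Real.exp 1), |χ u| ≤ Cb) {u : ℝ} (hu : 0 < u) (k : ℤ) :
    |χ (Real.exp (-(k : ℝ)) * u)| ≤
      (↑(Finset.Icc ⌊Real.log u⌋ ⌈Real.log u⌉) : Set ℤ).indicator (fun _ => Cb) k
        + |χ (Real.exp (-(k : ℝ)) * u)| * |(k : ℝ) - Real.log u| ^ ν := by
  have hCb0 : 0 ≤ Cb := le_trans (abs_nonneg _)
    (hCb 1 ⟨(Real.exp_le_one_iff).mpr (by norm_num), by
      simpa using Real.one_le_exp (by norm_num)⟩)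
  by_cases hk : |(k : ℝ) - Real.log u| < 1
  · rw [abs_lt] at hk
    have hk1 : k ∈ (↑(Finset.Icc ⌊Real.log u⌋ ⌈Real.log u⌉) : Set ℤ) := by
      simp only [Finset.coe_Icc, Set.mem_Icc]
      constructor
      · have h1 : (⌊Real.log u⌋ : ℝ) < (k : ℝ) + 1 := by
          have := Int.floor_le (Real.log u); linarith
        have : ⌊Real.log u⌋ < k + 1 := by exact_mod_cast h1
        omega
      · have h1 : (k : ℝ) < (⌈Real.log u⌉ : ℝ) + 1 := by
          have := Int.le_ceil (Real.log u); linarith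
        have : k < ⌈Real.log u⌉ + 1 := by exact_mod_cast h1
        omega
    rw [Set.indicator_of_mem hk1]
    have hmem : Real.exp (-(k : ℝ)) * u ∈ Icc (Real.exp (-1)) (Real.exp 1) := by
      have heq : Real.exp (-(k : ℝ)) * u = Real.exp (Real.log u - (k : ℝ)) := by
        rw [Real.exp_sub, Real.exp_log hu, Real.exp_neg, div_eq_inv_mul]
      rw [heq]
      exact ⟨Real.exp_le_exp.mpr (by linarith), Real.exp_le_exp.mpr (by linarith)⟩
    have := hCb _ hmem
    have hpos : 0 ≤ |χ (Real.exp (-(k : ℝ)) * u)| * |(k : ℝ) - Real.log u| ^ ν := by positivity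
    linarith
  · push_neg at hk
    have h1 : (1 : ℝ) ≤ |(k : ℝ) - Real.log u| ^ ν := by
      calc (1 : ℝ) = 1 ^ ν := (Real.one_rpow ν).symm
      _ ≤ |(k : ℝ) - Real.log u| ^ ν := Real.rpow_le_rpow zero_le_one hk hν.le
    have h2 : |χ (Real.exp (-(k : ℝ)) * u)| ≤
        |χ (Real.exp (-(k : ℝ)) * u)| * |(k : ℝ) - Real.log u| ^ ν :=
      le_mul_of_one_le_right (abs_nonneg _) h1
    have h3 : 0 ≤ (↑(Finset.Icc ⌊Real.log u⌋ ⌈Real.log u⌉) : Set ℤ).indicator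
        (fun _ => Cb) k := Set.indicator_nonneg (fun _ _ => hCb0) k
    linarith

private lemma ind_summable {Cb : ℝ} (u : ℝ) :
    Summable ((↑(Finset.Icc ⌊Real.log u⌋ ⌈Real.log u⌉) : Set ℤ).indicator
      (fun _ => Cb)) :=
  summable_of_ne_finset_zero (s := Finset.Icc ⌊Real.log u⌋ ⌈Real.log u⌉)
    (fun k hk => Set.indicator_of_notMem (by simpa using hk) _)

private lemma chi_summable (χ : ℝ → ℝ) {ν : ℝ} (hν : 0 < ν) (hM : absMoment χ ν < ⊤) {Cb : ℝ}
    (hCb : ∀ u ∈ Icc (Real.exp (-1)) (Real.exp 1), |χ u| ≤ Cb) {u : ℝ} (hu : 0 < u) :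
    Summable (fun k : ℤ => |χ (Real.exp (-(k : ℝ)) * u)|) :=
  Summable.of_nonneg_of_le (fun k => abs_nonneg _) (chi_pt_bound χ hν hCb hu)
    ((ind_summable u).add (G_summable χ hM hu))

private lemma chi_tsum_le (χ : ℝ → ℝ) {ν : ℝ} (hν : 0 < ν) (hM : absMoment χ ν < ⊤) {Cb : ℝ}
    (hCb : ∀ u ∈ Icc (Real.exp (-1)) (Real.exp 1), |χ u| ≤ Cb) {u : ℝ} (hu : 0 < u) :
    ∑' k : ℤ, |χ (Real.exp (-(k : ℝ)) * u)| ≤ 2 * Cb + (absMoment χ ν).toReal := by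
  have hCb0 : 0 ≤ Cb := le_trans (abs_nonneg _)
    (hCb 1 ⟨(Real.exp_le_one_iff).mpr (by norm_num), by
      simpa using Real.one_le_exp (by norm_num)⟩)
  have hind := ind_summable (Cb := Cb) u
  have hG := G_summable χ hM hu
  calc ∑' k : ℤ, |χ (Real.exp (-(k : ℝ)) * u)|
      ≤ ∑' k : ℤ, ((↑(Finset.Icc ⌊Real.log u⌋ ⌈Real.log u⌉) : Set ℤ).indicator
          (fun _ => Cb) k + |χ (Real.exp (-(k : ℝ)) * u)| * |(k : ℝ) - Real.log u| ^ ν) :=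
        Summable.tsum_le_tsum (chi_pt_bound χ hν hCb hu) (chi_summable χ hν hM hCb hu) (hind.add hG)
    _ = (∑' k : ℤ, (↑(Finset.Icc ⌊Real.log u⌋ ⌈Real.log u⌉) : Set ℤ).indicator
          (fun _ => Cb) k)
        + ∑' k : ℤ, |χ (Real.exp (-(k : ℝ)) * u)| * |(k : ℝ) - Real.log u| ^ ν :=
        Summable.tsum_add hind hG
    _ ≤ 2 * Cb + (absMoment χ ν).toReal := by
        refine add_le_add ?_ (G_tsum_le χ hM hu)
        rw [tsum_eq_sum (s := Finset.Icc ⌊Real.log u⌋ ⌈Real.log u⌉)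
          (fun k hk => Set.indicator_of_notMem (by simpa using hk) _)]
        have hcard : (Finset.Icc ⌊Real.log u⌋ ⌈Real.log u⌉).card ≤ 2 := by
          rw [Int.card_Icc]
          have := Int.ceil_le_floor_add_one (Real.log u)
          omega
        calc ∑ k ∈ Finset.Icc ⌊Real.log u⌋ ⌈Real.log u⌉,
              (↑(Finset.Icc ⌊Real.log u⌋ ⌈Real.log u⌉) : Set ℤ).indicator (fun _ => Cb) k
            = ∑ _k ∈ Finset.Icc ⌊Real.log u⌋ ⌈Real.log u⌉, Cb :=
              Finset.sum_congr rfl (fun k hk => Set.indicator_of_mem (by simpa using hk) _)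
          _ = (Finset.Icc ⌊Real.log u⌋ ⌈Real.log u⌉).card * Cb := by
              rw [Finset.sum_const, nsmul_eq_mul]
          _ ≤ 2 * Cb := by
              refine mul_le_mul_of_nonneg_right ?_ hCb0
              exact_mod_cast hcard

private lemma gdiff_bound {f : ℝ → ℝ}
    (hInt : ∀ a b : ℝ, IntervalIntegrable (fun v => f (Real.exp v)) volume a b)
    {w : ℝ} (hw : 0 < w) (k : ℤ) {c B : ℝ}
    (hB : ∀ v ∈ Set.Ioc ((k : ℝ) / w) (((k : ℝ) + 1) / w), |f (Real.exp v) - c| ≤ B) :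
    |w * (∫ v in ((k : ℝ) / w)..(((k : ℝ) + 1) / w), f (Real.exp v)) - c| ≤ B := by
  have hw' : w ≠ 0 := hw.ne'
  have hle : (k : ℝ) / w ≤ ((k : ℝ) + 1) / w :=
    (div_le_div_iff_of_pos_right hw).mpr (by linarith)
  have heq : w * (∫ v in ((k : ℝ) / w)..(((k : ℝ) + 1) / w), f (Real.exp v)) - c
      = w * ∫ v in ((k : ℝ) / w)..(((k : ℝ) + 1) / w), (f (Real.exp v) - c) := by
    rw [intervalIntegral.integral_sub (hInt _ _) (intervalIntegrable_const),
      intervalIntegral.integral_const, smul_eq_mul]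
    rw [show ((k : ℝ) + 1) / w - (k : ℝ) / w = 1 / w by ring]
    field_simp
  have h2 := intervalIntegral.norm_integral_le_of_norm_le_const (C := B)
    (f := fun v => f (Real.exp v) - c) (a := (k : ℝ) / w) (b := ((k : ℝ) + 1) / w)
    (by
      intro v hv
      rw [Set.uIoc_of_le hle] at hv
      rw [Real.norm_eq_abs]
      exact hB v hv)
  have hba : |((k : ℝ) + 1) / w - (k : ℝ) / w| = 1 / w := by
    rw [show ((k : ℝ) + 1) / w - (k : ℝ) / w = 1 / w by ring]
    exact abs_of_pos (one_div_pos.mpr hw)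
  have h3 : |∫ v in ((k : ℝ) / w)..(((k : ℝ) + 1) / w), (f (Real.exp v) - c)|
      ≤ B * (1 / w) := by
    simpa [Real.norm_eq_abs, hba] using h2
  rw [heq, abs_mul, abs_of_pos hw]
  calc w * |∫ v in ((k : ℝ) / w)..(((k : ℝ) + 1) / w), (f (Real.exp v) - c)|
      ≤ w * (B * (1 / w)) := mul_le_mul_of_nonneg_left h3 hw.le
    _ = B := by field_simp

/-- Pointwise convergence of `I_w^χ f` at a point of continuity. -/
theorem kanto_tendsto_at_continuity_point
    (χ f : ℝ → ℝ) (hχ : IsKernel χ) (hf : Measurable f)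
    (hfb : ∃ C, ∀ x : ℝ, 0 < x → |f x| ≤ C)
    (t : ℝ) (ht : 0 < t) (hcont : ContinuousWithinAt f (Ioi 0) t) :
    Tendsto (fun w => kanto χ f w t) atTop (nhds (f t)) := by
  obtain ⟨C, hC⟩ := hfb
  obtain ⟨Cb, hCb⟩ := hχ.bounded
  obtain ⟨ν, hν, hM⟩ := hχ.moment
  have hC0 : 0 ≤ C := (abs_nonneg _).trans (hC t ht)
  have hCb0 : 0 ≤ Cb := le_trans (abs_nonneg _)
    (hCb 1 ⟨(Real.exp_le_one_iff).mpr (by norm_num), by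
      simpa using Real.one_le_exp (by norm_num)⟩)
  set Mr : ℝ := (absMoment χ ν).toReal with hMr
  have hMr0 : 0 ≤ Mr := ENNReal.toReal_nonneg
  set m0 : ℝ := 2 * Cb + Mr with hm0def
  have hm0 : 0 ≤ m0 := by positivity
  -- integrability of v ↦ f (exp v)
  have hm : Measurable fun v => f (Real.exp v) := hf.comp Real.measurable_exp
  have hbd : ∀ v : ℝ, |f (Real.exp v)| ≤ C := fun v => hC _ (Real.exp_pos v)
  have hInt : ∀ a b : ℝ, IntervalIntegrable (fun v => f (Real.exp v)) volume a b := by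
    intro a b
    refine (intervalIntegrable_const (c := C)).mono_fun hm.aestronglyMeasurable ?_
    exact Filter.Eventually.of_forall fun v => by
      simp only [Real.norm_eq_abs]
      exact (hbd v).trans (le_abs_self C)
  -- continuity of v ↦ f (exp v) at log t
  have hcomp : Tendsto (fun v => f (Real.exp v)) (nhds (Real.log t)) (nhds (f t)) := by
    refine hcont.tendsto.comp ?_
    rw [tendsto_nhdsWithin_iff]
    constructor
    · have h := (Real.continuous_exp.continuousAt (x := Real.log t)).tendsto
      rwa [Real.exp_log ht] at h
    · exact Filter.Eventually.of_forall fun v => Real.exp_pos v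
  rw [Metric.tendsto_atTop]
  intro ε' hε'
  set ε : ℝ := ε' / (2 * (m0 + 1)) with hεdef
  have hε : 0 < ε := by positivity
  obtain ⟨δ, hδ, hP⟩ := Metric.tendsto_nhds_nhds.mp hcomp ε hε
  have hPP : ∀ v : ℝ, |v - Real.log t| < δ → |f (Real.exp v) - f t| < ε := by
    intro v hv
    have := hP (x := v) (by rwa [Real.dist_eq])
    rwa [Real.dist_eq] at this
  -- the key estimate for large w
  have key : ∀ w : ℝ, 4 / δ ≤ w →
      |kanto χ f w t - f t| ≤ ε * m0 + 2 * C * Mr / (w * (δ / 4)) ^ ν := by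
    intro w hwge
    have hw : 0 < w := lt_of_lt_of_le (by positivity) hwge
    have hw' : w ≠ 0 := hw.ne'
    have hu : (0 : ℝ) < t ^ w := Real.rpow_pos_of_pos ht w
    have hlog : Real.log (t ^ w) = w * Real.log t := Real.log_rpow ht w
    set χk : ℤ → ℝ := fun k => χ (Real.exp (-(k : ℝ)) * t ^ w) with hχk
    set g : ℤ → ℝ := fun k =>
      w * ∫ v in ((k : ℝ) / w)..(((k : ℝ) + 1) / w), f (Real.exp v) with hg
    set G : ℤ → ℝ := fun k => |χk k| * |(k : ℝ) - Real.log (t ^ w)| ^ ν with hGdef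
    have Sabs : Summable fun k : ℤ => |χk k| := chi_summable χ hν hM hCb hu
    have SG : Summable G := G_summable χ hM hu
    set R : ℝ := (w * (δ / 4)) ^ ν with hRdef
    have hR : 0 < R := Real.rpow_pos_of_pos (by positivity) ν
    -- bounds on g k - f t
    have hgbd : ∀ k : ℤ, |g k - f t| ≤ 2 * C := by
      intro k
      refine gdiff_bound hInt hw k fun v _ => ?_
      calc |f (Real.exp v) - f t| ≤ |f (Real.exp v)| + |f t| := abs_sub _ _
        _ ≤ C + C := add_le_add (hbd v) (hC t ht)
        _ = 2 * C := by ring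
    have hgnear : ∀ k : ℤ, |(k : ℝ) - w * Real.log t| ≤ w * (δ / 4) →
        |g k - f t| ≤ ε := by
      intro k hk
      refine gdiff_bound hInt hw k fun v hv => ?_
      have h1 : |(k : ℝ) / w - Real.log t| ≤ δ / 4 := by
        rw [show (k : ℝ) / w - Real.log t = ((k : ℝ) - w * Real.log t) / w by
          field_simp, abs_div, abs_of_pos hw]
        rw [div_le_iff₀ hw]
        calc |(k : ℝ) - w * Real.log t| ≤ w * (δ / 4) := hk
          _ = δ / 4 * w := by ring
      have h2 : 1 / w ≤ δ / 4 := by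
        have := one_div_le_one_div_of_le (by positivity : (0:ℝ) < 4 / δ) hwge
        rwa [one_div_div] at this
      have h3 : |v - Real.log t| < δ := by
        obtain ⟨hv1, hv2⟩ := hv
        have hvk : |v - (k : ℝ) / w| ≤ 1 / w := by
          rw [abs_le]
          constructor
          · have : (k : ℝ) / w ≤ v := hv1.le
            have h1w : (0:ℝ) < 1 / w := by positivity
            linarith
          · have : v ≤ ((k : ℝ) + 1) / w := hv2
            have : v - (k : ℝ) / w ≤ ((k : ℝ) + 1) / w - (k : ℝ) / w := by linarith
            rwa [show ((k : ℝ) + 1) / w - (k : ℝ) / w = 1 / w by ring] at this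
        calc |v - Real.log t| ≤ |v - (k : ℝ) / w| + |(k : ℝ) / w - Real.log t| := by
              have := abs_sub_le v ((k : ℝ) / w) (Real.log t)
              simpa using this
          _ ≤ 1 / w + δ / 4 := add_le_add hvk h1
          _ ≤ δ / 4 + δ / 4 := by linarith
          _ < δ := by linarith
      exact (hPP v h3).le
    -- per-term bound
    have hterm : ∀ k : ℤ, |χk k * (g k - f t)| ≤ ε * |χk k| + 2 * C / R * G k := by
      intro k
      rw [abs_mul]
      by_cases hk : |(k : ℝ) - w * Real.log t| ≤ w * (δ / 4)
      · have h1 : |χk k| * |g k - f t| ≤ |χk k| * ε :=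
          mul_le_mul_of_nonneg_left (hgnear k hk) (abs_nonneg _)
        have h2 : 0 ≤ 2 * C / R * G k := by
          have hG0 : 0 ≤ G k := by
            rw [hGdef]; positivity
          positivity
        calc |χk k| * |g k - f t| ≤ |χk k| * ε := h1
          _ = ε * |χk k| := by ring
          _ ≤ ε * |χk k| + 2 * C / R * G k := le_add_of_nonneg_right h2
      · push_neg at hk
        have hfar : R ≤ |(k : ℝ) - Real.log (t ^ w)| ^ ν := by
          rw [hlog, hRdef]
          exact Real.rpow_le_rpow (by positivity) hk.le hν.le
        have hχG : |χk k| ≤ G k / R := by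
          rw [le_div_iff₀ hR]
          calc |χk k| * R ≤ |χk k| * |(k : ℝ) - Real.log (t ^ w)| ^ ν :=
              mul_le_mul_of_nonneg_left hfar (abs_nonneg _)
            _ = G k := rfl
        have h1 : |χk k| * |g k - f t| ≤ G k / R * (2 * C) := by
          refine mul_le_mul hχG (hgbd k) (abs_nonneg _) ?_
          have hG0 : 0 ≤ G k := by rw [hGdef]; positivity
          positivity
        have h2 : 0 ≤ ε * |χk k| := by positivity
        calc |χk k| * |g k - f t| ≤ G k / R * (2 * C) := h1
          _ = 2 * C / R * G k := by ring
          _ ≤ ε * |χk k| + 2 * C / R * G k := le_add_of_nonneg_left h2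
    -- rewrite kanto − f t as a single sum
    have hpart : HasSum (fun k : ℤ => χk k) 1 := hχ.partition _ hu
    have hSg : Summable fun k : ℤ => χk k * g k := by
      rw [← summable_abs_iff]
      refine Summable.of_nonneg_of_le (fun k => abs_nonneg _) (fun k => ?_)
        (Sabs.mul_right (3 * C))
      rw [abs_mul]
      refine mul_le_mul_of_nonneg_left ?_ (abs_nonneg _)
      calc |g k| ≤ |g k - f t| + |f t| := by
            have := abs_sub_abs_le_abs_sub (g k) (f t)
            have := abs_sub (g k) (f t)
            calc |g k| = |(g k - f t) + f t| := by ring_nf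
              _ ≤ |g k - f t| + |f t| := abs_add_le _ _
        _ ≤ 2 * C + C := add_le_add (hgbd k) (hC t ht)
        _ = 3 * C := by ring
    have h2 : HasSum (fun k : ℤ => χk k * g k - χk k * f t)
        ((∑' k : ℤ, χk k * g k) - 1 * f t) :=
      hSg.hasSum.sub (hpart.mul_right (f t))
    have hdiff : kanto χ f w t - f t = ∑' k : ℤ, χk k * (g k - f t) := by
      have hk1 : kanto χ f w t = ∑' k : ℤ, χk k * g k := rfl
      rw [hk1]
      calc (∑' k : ℤ, χk k * g k) - f t
          = (∑' k : ℤ, χk k * g k) - 1 * f t := by ring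
        _ = ∑' k : ℤ, (χk k * g k - χk k * f t) := h2.tsum_eq.symm
        _ = ∑' k : ℤ, χk k * (g k - f t) := tsum_congr fun k => by ring
    have hsum_abs : Summable fun k : ℤ => |χk k * (g k - f t)| := by
      refine Summable.of_nonneg_of_le (fun k => abs_nonneg _) (fun k => ?_)
        (Sabs.mul_right (2 * C))
      rw [abs_mul]
      exact mul_le_mul_of_nonneg_left (hgbd k) (abs_nonneg _)
    have habs : |kanto χ f w t - f t| ≤ ∑' k : ℤ, |χk k * (g k - f t)| := by
      rw [hdiff]
      have h := norm_tsum_le_tsum_norm (f := fun k : ℤ => χk k * (g k - f t))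
        (hsum_abs.congr fun k => (Real.norm_eq_abs _).symm)
      simp only [Real.norm_eq_abs] at h
      exact h
    have h3 : ∑' k : ℤ, |χk k * (g k - f t)|
        ≤ ∑' k : ℤ, (ε * |χk k| + 2 * C / R * G k) :=
      Summable.tsum_le_tsum hterm hsum_abs ((Sabs.mul_left ε).add (SG.mul_left (2 * C / R)))
    have h4 : ∑' k : ℤ, (ε * |χk k| + 2 * C / R * G k)
        = ε * (∑' k : ℤ, |χk k|) + 2 * C / R * ∑' k : ℤ, G k := by
      rw [Summable.tsum_add (Sabs.mul_left ε) (SG.mul_left (2 * C / R)), tsum_mul_left,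
        tsum_mul_left]
    have h5 : ε * (∑' k : ℤ, |χk k|) + 2 * C / R * ∑' k : ℤ, G k
        ≤ ε * m0 + 2 * C * Mr / R := by
      refine add_le_add ?_ ?_
      · exact mul_le_mul_of_nonneg_left (chi_tsum_le χ hν hM hCb hu) hε.le
      · calc 2 * C / R * ∑' k : ℤ, G k ≤ 2 * C / R * Mr :=
            mul_le_mul_of_nonneg_left (G_tsum_le χ hM hu) (by positivity)
          _ = 2 * C * Mr / R := by ring
    calc |kanto χ f w t - f t| ≤ ∑' k : ℤ, |χk k * (g k - f t)| := habs
      _ ≤ ∑' k : ℤ, (ε * |χk k| + 2 * C / R * G k) := h3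
      _ = ε * (∑' k : ℤ, |χk k|) + 2 * C / R * ∑' k : ℤ, G k := h4
      _ ≤ ε * m0 + 2 * C * Mr / R := h5
  -- choose N large enough
  set K : ℝ := 4 * C * Mr / ε' + 1 with hKdef
  have hK : 0 < K := by positivity
  have hRtend : Tendsto (fun w : ℝ => (w * (δ / 4)) ^ ν) atTop atTop :=
    (_root_.tendsto_rpow_atTop hν).comp (Tendsto.atTop_mul_const (by positivity) tendsto_id)
  have hev : ∀ᶠ w : ℝ in atTop, K ≤ (w * (δ / 4)) ^ ν ∧ 4 / δ ≤ w :=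
    (hRtend.eventually_ge_atTop K).and (eventually_ge_atTop (4 / δ))
  obtain ⟨N, hN⟩ := eventually_atTop.mp hev
  refine ⟨N, fun w hw => ?_⟩
  obtain ⟨hw1, hw2⟩ := hN w hw
  have hkey := key w hw2
  rw [Real.dist_eq]
  have hεm0 : ε * m0 ≤ ε' / 2 := by
    rw [hεdef, div_mul_eq_mul_div, div_le_div_iff₀ (by positivity) two_pos]
    nlinarith
  have hRK : 2 * C * Mr / (w * (δ / 4)) ^ ν < ε' / 2 := by
    have hRpos : (0:ℝ) < (w * (δ / 4)) ^ ν := lt_of_lt_of_le hK hw1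
    calc 2 * C * Mr / (w * (δ / 4)) ^ ν ≤ 2 * C * Mr / K :=
        div_le_div_of_nonneg_left (by positivity) hK hw1
      _ < ε' / 2 := by
        rw [div_lt_iff₀ hK]
        have hexp : ε' / 2 * K = 2 * C * Mr + ε' / 2 := by
          rw [hKdef]
          field_simp
          ring
        linarith
  calc |kanto χ f w t - f t| ≤ ε * m0 + 2 * C * Mr / (w * (δ / 4)) ^ ν := hkey
    _ < ε' / 2 + ε' / 2 := by linarith
    _ = ε' := by ring
end

section
/- Let χ: ℝ⁺ → ℝ be a kernel, let f: ℝ⁺ → ℝ be a bounded measurable function with a non-removable jump discontinuity at t ∈ ℝ⁺ (i.e., f(t+0) and f(t−0) exist, are finite, and f(t+0) ≠ f(t−0)), and let α ∈ ℝ. Then the following are equivalent: (i) the limit of (I_w^χ f)(t) as w → ∞ restricted to those w > 0 with w·log t ∈ ℤ equals [χ(1) + α]·f(t+0) + [1 − α − χ(1)]·f(t−0); (ii) ψ_χ⁻(1) = α. -/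
open Real MeasureTheory Filter Set

/-- Convergence of `I_w^χ f` at a non-removable jump discontinuity along `w` with
`w·log t ∈ ℤ`, characterized by `ψ_χ⁻(1) = α`. -/
theorem kanto_jump_integral_case_iff
    (χ f : ℝ → ℝ) (hχ : IsKernel χ) (hf : Measurable f)
    (hfb : ∃ C, ∀ x : ℝ, 0 < x → |f x| ≤ C)
    (t : ℝ) (ht : 0 < t) (fp fm : ℝ)
    (hplus : Tendsto f (nhdsWithin t (Ioi t)) (nhds fp))
    (hminus : Tendsto f (nhdsWithin t (Iio t)) (nhds fm))
    (hjump : fp ≠ fm) (α : ℝ) :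
    Tendsto (fun w => kanto χ f w t)
        (atTop ⊓ 𝓟 {w : ℝ | 0 < w ∧ ∃ k : ℤ, w * Real.log t = (k : ℝ)})
        (nhds ((χ 1 + α) * fp + (1 - α - χ 1) * fm))
      ↔ psiMinus χ 1 = α := by
  obtain ⟨C, hC⟩ := hfb
  have hC0 : 0 ≤ C := (abs_nonneg _).trans (hC 1 one_pos)
  set lt := Real.log t with hltdef
  set g : ℤ → ℝ := fun k => χ (Real.exp (-(k : ℝ))) with hgdef
  set F := atTop ⊓ 𝓟 {w : ℝ | 0 < w ∧ ∃ k : ℤ, w * lt = (k : ℝ)} with hFdef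
  -- summability of |g|
  have hgabs : Summable (fun k : ℤ => |g k|) := by
    obtain ⟨ν, hν, hmom⟩ := hχ.moment
    have h1 : ∑' k : ℤ, ENNReal.ofReal
        (|χ (Real.exp (-(k : ℝ)) * (1:ℝ))| * |(k : ℝ) - Real.log 1| ^ ν) < ⊤ :=
      lt_of_le_of_lt (le_iSup (fun u : {x : ℝ // 0 < x} => ∑' k : ℤ,
        ENNReal.ofReal (|χ (Real.exp (-(k : ℝ)) * u.1)| * |(k : ℝ) - Real.log u.1| ^ ν))
        ⟨1, one_pos⟩) hmom
    have h2 := ENNReal.summable_toReal h1.ne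
    have h3 : Summable (fun k : ℤ => |χ (Real.exp (-(k : ℝ)))| * |(k : ℝ)| ^ ν) := by
      refine (h2.congr fun k => ?_)
      rw [ENNReal.toReal_ofReal (by positivity)]
      simp [Real.log_one]
    set g0 : ℤ → ℝ := fun k => if k = 0 then |χ (Real.exp (-((0:ℤ) : ℝ)))| else 0 with hg0
    have hsg0 : Summable g0 :=
      summable_of_ne_finset_zero (s := {(0:ℤ)}) (fun k hk => if_neg (by simpa using hk))
    refine Summable.of_nonneg_of_le (fun k => abs_nonneg _) (fun k => ?_) (h3.add hsg0)
    show |χ (Real.exp (-(k : ℝ)))| ≤ _ + g0 k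
    rcases eq_or_ne k 0 with rfl | hk
    · simp [hg0, Real.zero_rpow hν.ne']
    · have hgk : g0 k = 0 := if_neg hk
      rw [hgk, add_zero]
      refine le_mul_of_one_le_right (abs_nonneg _) (Real.one_le_rpow ?_ hν.le)
      have h4 : (1 : ℤ) ≤ |k| := Int.one_le_abs hk
      calc (1:ℝ) ≤ |(k:ℤ)| := by exact_mod_cast h4
      _ = |(k:ℝ)| := by push_cast; rfl
  have hgsum : Summable g := hgabs.of_abs
  have hpart : HasSum g 1 := by
    simpa using hχ.partition 1 one_pos
  set β := psiMinus χ 1 with hβdef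
  have hβeq : β = ∑' k : ℤ, Set.indicator {k : ℤ | 0 < k} g k := by
    have h1 : psiMinus χ 1 = ∑' k : ↥{k : ℤ | Real.log 1 < (k : ℝ)}, g k.1 :=
      tsum_congr fun k => by simp [hgdef]
    have hset : {k : ℤ | Real.log 1 < (k : ℝ)} = {k : ℤ | 0 < k} := by
      ext k; simp [Real.log_one]
    rw [hβdef, h1, tsum_subtype {k : ℤ | Real.log 1 < (k : ℝ)} g, hset]
  -- the filter is nontrivial
  have hFne : F.NeBot := by
    rw [hFdef, ← frequently_mem_iff_neBot, frequently_atTop]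
    intro a
    by_cases h0 : lt = 0
    · exact ⟨max a 1, le_max_left _ _, lt_of_lt_of_le one_pos (le_max_right a 1),
        ⟨0, by simp [h0]⟩⟩
    · have hc : 0 < |lt| := abs_pos.mpr h0
      set n : ℕ := ⌈max a 1 * |lt|⌉₊ + 1 with hn
      refine ⟨(n : ℝ) / |lt|, ?_, ?_, ?_⟩
      · have h1 : max a 1 * |lt| ≤ (n : ℝ) := (Nat.le_ceil _).trans (by push_cast [hn]; linarith)
        calc a ≤ max a 1 := le_max_left _ _
        _ = max a 1 * |lt| / |lt| := by field_simp
        _ ≤ (n : ℝ) / |lt| := by gcongr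
      · positivity
      · rcases lt_or_gt_of_ne h0 with hneg | hpos
        · refine ⟨-(n : ℤ), ?_⟩
          rw [abs_of_neg hneg]; push_cast
          rw [div_mul_eq_mul_div, div_eq_iff (neg_ne_zero.mpr h0)]; ring
        · exact ⟨(n : ℤ), by rw [abs_of_pos hpos]; push_cast; field_simp⟩
  -- integrability
  have hint : ∀ a b : ℝ, IntervalIntegrable (fun u => f (Real.exp u)) volume a b := by
    intro a b
    rw [intervalIntegrable_iff]
    refine Integrable.mono' (g := fun _ => C)
      ((integrableOn_const_iff (C := C)).mpr (Or.inr measure_Ioc_lt_top))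
      ((hf.comp Real.measurable_exp).aestronglyMeasurable.restrict) ?_
    exact Eventually.of_forall fun u => by
      simpa [Real.norm_eq_abs] using hC _ (Real.exp_pos u)
  -- average convergence
  have havg : ∀ j : ℤ, Tendsto
      (fun w : ℝ => w * ∫ u in (lt + (j : ℝ) / w)..(lt + ((j : ℝ) + 1) / w), f (Real.exp u))
      atTop (nhds (if 0 ≤ j then fp else fm)) := by
    intro j
    have hexp : Real.exp lt = t := Real.exp_log ht
    have h1 : Tendsto Real.exp (nhds lt) (nhds t) := by
      have := Real.continuous_exp.continuousAt (x := lt)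
      rwa [ContinuousAt, hexp] at this
    have hfp' : Tendsto (fun u => f (Real.exp u)) (nhdsWithin lt (Ioi lt)) (nhds fp) := by
      refine hplus.comp (tendsto_nhdsWithin_iff.mpr ⟨h1.mono_left nhdsWithin_le_nhds, ?_⟩)
      refine eventually_mem_nhdsWithin.mono fun u hu => ?_
      show t < Real.exp u
      rw [← hexp]; exact Real.exp_lt_exp.mpr hu
    have hfm' : Tendsto (fun u => f (Real.exp u)) (nhdsWithin lt (Iio lt)) (nhds fm) := by
      refine hminus.comp (tendsto_nhdsWithin_iff.mpr ⟨h1.mono_left nhdsWithin_le_nhds, ?_⟩)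
      refine eventually_mem_nhdsWithin.mono fun u hu => ?_
      show Real.exp u < t
      rw [← hexp]; exact Real.exp_lt_exp.mpr hu
    have hfpm := Metric.tendsto_nhdsWithin_nhds.mp hfp'
    have hfmm := Metric.tendsto_nhdsWithin_nhds.mp hfm'
    have hae0 : ∀ᵐ x : ℝ, x ≠ lt := by
      have h0 : (volume : Measure ℝ) {lt} = 0 := measure_singleton lt
      rw [ae_iff]
      simpa only [not_not, Set.setOf_eq_eq_singleton] using h0
    by_cases hj : 0 ≤ j
    · rw [if_pos hj]
      rw [Metric.tendsto_nhds]
      intro ε hε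
      obtain ⟨δ, hδ, hδ'⟩ := hfpm (ε/2) (by positivity)
      filter_upwards [eventually_ge_atTop (max 1 (((j:ℝ)+1)/δ + 1))] with w hw
      have hw1 : (1:ℝ) ≤ w := le_trans (le_max_left _ _) hw
      have hw0 : 0 < w := lt_of_lt_of_le one_pos hw1
      have hj0 : (0:ℝ) ≤ (j:ℝ) := by exact_mod_cast hj
      have hjw : ((j:ℝ)+1)/w < δ := by
        have h2 : ((j:ℝ)+1)/δ + 1 ≤ w := le_trans (le_max_right _ _) hw
        rw [div_lt_iff₀ hw0]
        have h3 : ((j:ℝ)+1)/δ < w := by linarith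
        calc (j:ℝ)+1 = ((j:ℝ)+1)/δ * δ := by field_simp
        _ < w * δ := mul_lt_mul_of_pos_right h3 hδ
        _ = δ * w := mul_comm _ _
      set a := lt + (j:ℝ)/w with hadef
      set b := lt + ((j:ℝ)+1)/w with hbdef
      have hab : a ≤ b := by
        have : (j:ℝ)/w ≤ ((j:ℝ)+1)/w := by gcongr; linarith
        simpa [hadef, hbdef] using this
      have hba : b - a = 1/w := by rw [hadef, hbdef]; ring
      have hae : ∀ x ∈ Set.Ioc a b, |f (Real.exp x) - fp| ≤ ε/2 := by
        intro x hx
        have hla : lt ≤ a := by rw [hadef]; nlinarith [div_nonneg hj0 hw0.le]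
        have hx1 : lt < x := lt_of_le_of_lt hla hx.1
        have hx2 : x - lt ≤ ((j:ℝ)+1)/w := by
          have := hx.2; rw [hbdef] at this; linarith
        have := hδ' (show x ∈ Ioi lt from hx1)
          (show dist x lt < δ by rw [Real.dist_eq, abs_of_pos (sub_pos.mpr hx1)]; linarith)
        rw [Real.dist_eq] at this; exact this.le
      have hIeq : (∫ u in a..b, f (Real.exp u)) - (b - a) * fp
          = ∫ u in a..b, (f (Real.exp u) - fp) := by
        rw [intervalIntegral.integral_sub (hint a b) intervalIntegrable_const,
          intervalIntegral.integral_const, smul_eq_mul]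
      have hIle : |∫ u in a..b, (f (Real.exp u) - fp)| ≤ ε/2 * |b - a| := by
        rw [← Real.norm_eq_abs]
        apply intervalIntegral.norm_integral_le_of_norm_le_const
        intro x hx
        rw [Set.uIoc_of_le hab] at hx
        simpa [Real.norm_eq_abs] using hae x hx
      rw [Real.dist_eq]
      have hkey : w * (∫ u in a..b, f (Real.exp u)) - fp
          = w * ((∫ u in a..b, f (Real.exp u)) - (b-a)*fp) := by
        rw [mul_sub, hba]; field_simp
      calc |w * (∫ u in a..b, f (Real.exp u)) - fp|
          = |w| * |(∫ u in a..b, f (Real.exp u)) - (b-a)*fp| := by rw [hkey, abs_mul]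
        _ = w * |∫ u in a..b, (f (Real.exp u) - fp)| := by rw [abs_of_pos hw0, hIeq]
        _ ≤ w * (ε/2 * |b - a|) := mul_le_mul_of_nonneg_left hIle hw0.le
        _ = ε/2 := by rw [hba, abs_of_pos (by positivity : (0:ℝ) < 1/w)]; field_simp
        _ < ε := by linarith
    · rw [if_neg hj]
      have hjneg : j < 0 := not_le.mp hj
      have hj1 : (j:ℝ) + 1 ≤ 0 := by exact_mod_cast hjneg
      rw [Metric.tendsto_nhds]
      intro ε hε
      obtain ⟨δ, hδ, hδ'⟩ := hfmm (ε/2) (by positivity)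
      filter_upwards [eventually_ge_atTop (max 1 ((-(j:ℝ))/δ + 1))] with w hw
      have hw1 : (1:ℝ) ≤ w := le_trans (le_max_left _ _) hw
      have hw0 : 0 < w := lt_of_lt_of_le one_pos hw1
      have hjw : (-(j:ℝ))/w < δ := by
        have h2 : (-(j:ℝ))/δ + 1 ≤ w := le_trans (le_max_right _ _) hw
        rw [div_lt_iff₀ hw0]
        have h3 : (-(j:ℝ))/δ < w := by linarith
        calc -(j:ℝ) = (-(j:ℝ))/δ * δ := by field_simp
        _ < w * δ := mul_lt_mul_of_pos_right h3 hδ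
        _ = δ * w := mul_comm _ _
      set a := lt + (j:ℝ)/w with hadef
      set b := lt + ((j:ℝ)+1)/w with hbdef
      have hab : a ≤ b := by
        have : (j:ℝ)/w ≤ ((j:ℝ)+1)/w := by gcongr; linarith
        simpa [hadef, hbdef] using this
      have hba : b - a = 1/w := by rw [hadef, hbdef]; ring
      have hbl : b ≤ lt := by
        rw [hbdef]
        nlinarith [div_nonpos_of_nonpos_of_nonneg hj1 hw0.le]
      have hae : ∀ᵐ x : ℝ, x ∈ Set.uIoc a b → ‖f (Real.exp x) - fm‖ ≤ ε/2 := by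
        filter_upwards [hae0] with x hxne hx
        rw [Set.uIoc_of_le hab] at hx
        have hx2 : x < lt := lt_of_le_of_ne (hx.2.trans hbl) hxne
        have hx1 : lt - x < δ := by
          have hax : a < x := hx.1
          have h6 : lt - a < δ := by
            have h7 : lt - a = -(j:ℝ)/w := by rw [hadef]; ring
            rw [h7]; exact hjw
          linarith
        have := hδ' (show x ∈ Iio lt from hx2)
          (show dist x lt < δ by rw [Real.dist_eq, abs_of_neg (sub_neg.mpr hx2)]; linarith)
        rw [Real.dist_eq] at this
        simpa [Real.norm_eq_abs] using this.le
      have hIeq : (∫ u in a..b, f (Real.exp u)) - (b - a) * fm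
          = ∫ u in a..b, (f (Real.exp u) - fm) := by
        rw [intervalIntegral.integral_sub (hint a b) intervalIntegrable_const,
          intervalIntegral.integral_const, smul_eq_mul]
      have hIle : |∫ u in a..b, (f (Real.exp u) - fm)| ≤ ε/2 * |b - a| := by
        rw [← Real.norm_eq_abs]
        exact intervalIntegral.norm_integral_le_of_norm_le_const_ae hae
      rw [Real.dist_eq]
      have hkey : w * (∫ u in a..b, f (Real.exp u)) - fm
          = w * ((∫ u in a..b, f (Real.exp u)) - (b-a)*fm) := by
        rw [mul_sub, hba]; field_simp
      calc |w * (∫ u in a..b, f (Real.exp u)) - fm|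
          = |w| * |(∫ u in a..b, f (Real.exp u)) - (b-a)*fm| := by rw [hkey, abs_mul]
        _ = w * |∫ u in a..b, (f (Real.exp u) - fm)| := by rw [abs_of_pos hw0, hIeq]
        _ ≤ w * (ε/2 * |b - a|) := mul_le_mul_of_nonneg_left hIle hw0.le
        _ = ε/2 := by rw [hba, abs_of_pos (by positivity : (0:ℝ) < 1/w)]; field_simp
        _ < ε := by linarith
  set G : ℝ → ℤ → ℝ := fun w j =>
    g j * (w * ∫ u in (lt + (j : ℝ) / w)..(lt + ((j : ℝ) + 1) / w), f (Real.exp u)) with hGdef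
  set h : ℤ → ℝ := fun j => g j * (if 0 ≤ j then fp else fm) with hhdef
  have hmain1 : Tendsto (fun w => ∑' j, G w j) F (nhds (∑' j, h j)) := by
    apply tendsto_tsum_of_dominated_convergence (bound := fun j => |g j| * C)
      (hgabs.mul_right C)
    · intro j
      exact ((havg j).const_mul (g j)).mono_left inf_le_left
    · rw [hFdef]
      rw [eventually_inf_principal]
      refine Eventually.of_forall fun w hw => ?_
      obtain ⟨hw0, -⟩ := hw
      intro j
      rw [hGdef]
      show ‖g j * (w * ∫ u in (lt + (j : ℝ) / w)..(lt + ((j : ℝ) + 1) / w), f (Real.exp u))‖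
        ≤ |g j| * C
      rw [Real.norm_eq_abs, abs_mul]
      refine mul_le_mul_of_nonneg_left ?_ (abs_nonneg _)
      set a := lt + (j : ℝ) / w with hadef
      set b := lt + ((j : ℝ) + 1) / w with hbdef
      have hba : b - a = 1/w := by rw [hadef, hbdef]; ring
      have h1 : |∫ u in a..b, f (Real.exp u)| ≤ C * |b - a| := by
        rw [← Real.norm_eq_abs]
        apply intervalIntegral.norm_integral_le_of_norm_le_const
        intro x _
        simpa [Real.norm_eq_abs] using hC _ (Real.exp_pos x)
      calc |w * ∫ u in a..b, f (Real.exp u)| = w * |∫ u in a..b, f (Real.exp u)| := by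
            rw [abs_mul, abs_of_pos hw0]
        _ ≤ w * (C * |b - a|) := mul_le_mul_of_nonneg_left h1 hw0.le
        _ = C := by rw [hba, abs_of_pos (by positivity : (0:ℝ) < 1/w)]; field_simp
  have heq : ∀ᶠ w in F, kanto χ f w t = ∑' j, G w j := by
    rw [hFdef, eventually_inf_principal]
    refine Eventually.of_forall fun w hw => ?_
    obtain ⟨hw0, k₀, hk⟩ := hw
    have hwne : w ≠ 0 := ne_of_gt hw0
    have hlt : lt = (k₀ : ℝ) / w := by field_simp; linarith
    have step : ∀ k : ℤ, χ (Real.exp (-(k : ℝ)) * t ^ w) *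
        (w * ∫ u in ((k : ℝ) / w)..(((k : ℝ) + 1) / w), f (Real.exp u)) = G w (k - k₀) := by
      intro k
      have e1 : Real.exp (-(k : ℝ)) * t ^ w = Real.exp (-(((k - k₀ : ℤ) : ℝ))) := by
        rw [Real.rpow_def_of_pos ht, ← Real.exp_add]
        congr 1
        push_cast
        linear_combination hk
      have e2 : ((k : ℝ)) / w = lt + ((k - k₀ : ℤ) : ℝ) / w := by
        rw [hlt]; push_cast; ring
      have e3 : ((k : ℝ) + 1) / w = lt + (((k - k₀ : ℤ) : ℝ) + 1) / w := by
        rw [hlt]; push_cast; ring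
      rw [e1, e2, e3, hGdef]
    rw [kanto, tsum_congr step]
    exact (Equiv.subRight k₀).tsum_eq (G w)
  have hmain : Tendsto (fun w => kanto χ f w t) F (nhds (∑' j, h j)) :=
    hmain1.congr' (heq.mono fun w hw => hw.symm)
  have hχ1 : g 0 = χ 1 := by simp [hgdef]
  have hsumh : ∑' j, h j = (χ 1 + β) * fp + (1 - β - χ 1) * fm := by
    rw [← hχ1]
    set s : Set ℤ := {j : ℤ | 0 ≤ j} with hs
    have hind1 : Summable (s.indicator g) := hgsum.indicator _
    have hind2 : Summable (sᶜ.indicator g) := hgsum.indicator _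
    have hdecomp : ∀ j : ℤ, h j = fp * s.indicator g j + fm * sᶜ.indicator g j := by
      intro j
      rw [hhdef]
      show g j * (if 0 ≤ j then fp else fm) = _
      by_cases hj : 0 ≤ j
      · rw [if_pos hj, Set.indicator_of_mem (show j ∈ s from hj) g,
          Set.indicator_of_notMem (show j ∉ sᶜ from fun hh => hh hj) g]
        ring
      · rw [if_neg hj, Set.indicator_of_notMem (show j ∉ s from hj) g,
          Set.indicator_of_mem (show j ∈ sᶜ from hj) g]
        ring
    rw [tsum_congr hdecomp, Summable.tsum_add (hind1.mul_left fp) (hind2.mul_left fm),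
      tsum_mul_left, tsum_mul_left]
    set g0 : ℤ → ℝ := fun j => if j = 0 then g 0 else 0 with hg0
    have hsg0 : Summable g0 :=
      summable_of_ne_finset_zero (s := {(0:ℤ)}) (fun k hk => if_neg (by simpa using hk))
    have hsplit : ∀ j : ℤ, s.indicator g j = g0 j + {k : ℤ | 0 < k}.indicator g j := by
      intro j
      rcases lt_trichotomy j 0 with hj | rfl | hj
      · rw [Set.indicator_of_notMem (show j ∉ s from hj.not_ge) g,
          Set.indicator_of_notMem (show j ∉ {k : ℤ | 0 < k} from hj.not_gt) g,
          show g0 j = 0 from if_neg hj.ne]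
        ring
      · rw [Set.indicator_of_mem (by simp [hs] : (0:ℤ) ∈ s) g,
          Set.indicator_of_notMem (by simp : (0:ℤ) ∉ {k : ℤ | 0 < k}) g,
          show g0 0 = g 0 from if_pos rfl]
        ring
      · rw [Set.indicator_of_mem (show j ∈ s from hj.le) g,
          Set.indicator_of_mem (show j ∈ {k : ℤ | 0 < k} from hj) g,
          show g0 j = 0 from if_neg hj.ne']
        ring
    have hSp : ∑' j, s.indicator g j = g 0 + β := by
      rw [tsum_congr hsplit, Summable.tsum_add hsg0 (hgsum.indicator _), hβeq, hg0, tsum_ite_eq]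
    have htot : (∑' j, s.indicator g j) + (∑' j, sᶜ.indicator g j) = 1 := by
      rw [← Summable.tsum_add hind1 hind2]
      have h5 : ∀ j, s.indicator g j + sᶜ.indicator g j = g j := fun j =>
        congrFun (s.indicator_self_add_compl g) j
      rw [tsum_congr h5, hpart.tsum_eq]
    rw [hSp]
    have hSm : ∑' j, sᶜ.indicator g j = 1 - (g 0 + β) := by linarith
    rw [hSm]; ring
  rw [hsumh] at hmain
  constructor
  · intro H
    have hEq := tendsto_nhds_unique H hmain
    have h8 : (α - β) * (fp - fm) = 0 := by linear_combination hEq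
    rcases mul_eq_zero.1 h8 with h1 | h2
    · linarith [sub_eq_zero.1 h1]
    · exact absurd (sub_eq_zero.1 h2) hjump
  · intro hα
    rw [← hα]
    exact hmain
end

section
/- Let χ: ℝ⁺ → ℝ be a continuous kernel satisfying χ(u) = 0 for every u ∈ [1, e), and let α ∈ ℝ. Then ψ_χ⁻(u) = α for every u ∈ [1, e) if and only if for every integer k: ∫₀¹ χ(u)·u^{2kπi} du/u = 0 when k ≠ 0 and = α when k = 0. -/
open Real MeasureTheory Filter Set

section kernelAux

variable {χ : ℝ → ℝ} {ν Mr C B : ℝ}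

noncomputable def Hker (χ : ℝ → ℝ) (t : ℝ) : ℝ := ∑' n : ℕ, χ (Real.exp (t - ((n : ℝ) + 1)))


variable {χ : ℝ → ℝ} {ν Mr C : ℝ}

-- moment bound in t-form
lemma moment_t (h : ∃ ν > 0, absMoment χ ν < ⊤) :
    ∃ ν : ℝ, 0 < ν ∧ ∃ Mr : ℝ, 0 ≤ Mr ∧ ∀ t : ℝ, ∑' k : ℤ,
      ENNReal.ofReal (|χ (Real.exp (t - (k:ℝ)))| * |(k : ℝ) - t| ^ ν) ≤ ENNReal.ofReal Mr := by
  obtain ⟨ν, hν, hfin⟩ := h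
  rw [absMoment] at hfin
  set S := (⨆ u : {x : ℝ // 0 < x}, ∑' k : ℤ,
    ENNReal.ofReal (|χ (Real.exp (-(k : ℝ)) * u.1)| * |(k : ℝ) - Real.log u.1| ^ ν)) with hS
  refine ⟨ν, hν, S.toReal, ENNReal.toReal_nonneg, fun t => ?_⟩
  have h1 : (∑' k : ℤ, ENNReal.ofReal (|χ (Real.exp (-(k : ℝ)) * Real.exp t)| *
      |(k : ℝ) - Real.log (Real.exp t)| ^ ν)) ≤ S := le_iSup_of_le ⟨Real.exp t, Real.exp_pos t⟩ le_rfl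
  rw [ENNReal.ofReal_toReal hfin.ne]
  refine le_trans (le_of_eq ?_) h1
  congr 1; ext k
  rw [Real.log_exp, ← Real.exp_add]
  ring_nf

lemma bound_mid (h : ∃ C, ∀ u ∈ Icc (Real.exp (-1)) (Real.exp 1), |χ u| ≤ C) :
    ∃ C ≥ 0, ∀ (t : ℝ) (k : ℤ), |(k : ℝ) - t| ≤ 1 → |χ (Real.exp (t - (k:ℝ)))| ≤ C := by
  obtain ⟨C, hC⟩ := h
  have h0 : (0:ℝ) ≤ C := le_trans (abs_nonneg _) (hC 1 ⟨Real.exp_le_exp.2 (by norm_num) |>.trans (le_of_eq (Real.exp_zero)) |>.trans ?_ , ?_⟩)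
  · refine ⟨C, h0, fun t k hk => hC _ ⟨?_, ?_⟩⟩
    · exact Real.exp_le_exp.2 (by rw [abs_le] at hk; linarith)
    · exact Real.exp_le_exp.2 (by rw [abs_le] at hk; linarith)
  · exact le_rfl
  · exact Real.one_le_exp (by norm_num)




lemma abs_sum_bound (hν : 0 < ν) (hMr : 0 ≤ Mr) (hC : 0 ≤ C)
    (hM : ∀ t : ℝ, ∑' k : ℤ,
      ENNReal.ofReal (|χ (Real.exp (t - (k:ℝ)))| * |(k : ℝ) - t| ^ ν) ≤ ENNReal.ofReal Mr)
    (hCb : ∀ (t : ℝ) (k : ℤ), |(k : ℝ) - t| ≤ 1 → |χ (Real.exp (t - (k:ℝ)))| ≤ C) (t : ℝ) :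
    ∑' k : ℤ, ENNReal.ofReal |χ (Real.exp (t - (k:ℝ)))| ≤ ENNReal.ofReal (Mr + 3 * C) := by
  have key : ∀ k : ℤ, ENNReal.ofReal |χ (Real.exp (t - (k:ℝ)))| ≤
      ENNReal.ofReal (|χ (Real.exp (t - (k:ℝ)))| * |(k : ℝ) - t| ^ ν) +
      (if |(k : ℝ) - t| ≤ 1 then ENNReal.ofReal C else 0) := by
    intro k
    by_cases hk : |(k : ℝ) - t| ≤ 1
    · rw [if_pos hk]
      exact le_add_left (ENNReal.ofReal_le_ofReal (hCb t k hk))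
    · rw [if_neg hk]
      push_neg at hk
      rw [add_zero]
      refine ENNReal.ofReal_le_ofReal ?_
      nth_rewrite 1 [← mul_one |χ (Real.exp (t - (k:ℝ)))|]
      exact mul_le_mul_of_nonneg_left (Real.one_le_rpow hk.le hν.le) (abs_nonneg _)
  calc ∑' k : ℤ, ENNReal.ofReal |χ (Real.exp (t - (k:ℝ)))|
      ≤ ∑' k : ℤ, (ENNReal.ofReal (|χ (Real.exp (t - (k:ℝ)))| * |(k : ℝ) - t| ^ ν) +
        (if |(k : ℝ) - t| ≤ 1 then ENNReal.ofReal C else 0)) := ENNReal.tsum_le_tsum key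
    _ = (∑' k : ℤ, ENNReal.ofReal (|χ (Real.exp (t - (k:ℝ)))| * |(k : ℝ) - t| ^ ν)) +
        ∑' k : ℤ, (if |(k : ℝ) - t| ≤ 1 then ENNReal.ofReal C else 0) := ENNReal.tsum_add
    _ ≤ ENNReal.ofReal Mr + 3 * ENNReal.ofReal C := by
        refine add_le_add (hM t) ?_
        have hsupp : ∀ k : ℤ, k ∉ ({⌊t⌋ - 1, ⌊t⌋, ⌊t⌋ + 1} : Finset ℤ) →
            (if |(k : ℝ) - t| ≤ 1 then ENNReal.ofReal C else 0) = 0 := by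
          intro k hk
          rw [if_neg]
          intro habs
          rw [abs_le] at habs
          apply hk
          simp only [Finset.mem_insert, Finset.mem_singleton]
          have h1 : (k:ℝ) ≤ t + 1 := by linarith [habs.2]
          have h2 : t - 1 ≤ (k:ℝ) := by linarith [habs.1]
          have hf1 : k ≤ ⌊t⌋ + 1 := by
            have := Int.le_floor.2 (by push_cast; linarith : ((k - 1 : ℤ) : ℝ) ≤ t)
            omega
          have hf2 : ⌊t⌋ - 1 ≤ k := by
            have : (⌊t⌋ : ℝ) ≤ t := Int.floor_le t
            have : (⌊t⌋ : ℝ) ≤ (k:ℝ) + 1 := by linarith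
            exact_mod_cast by exact_mod_cast (by exact_mod_cast this : (⌊t⌋:ℝ) ≤ ((k+1:ℤ):ℝ)) |> Int.cast_le.mp |> (by omega : ⌊t⌋ ≤ k + 1 → ⌊t⌋ - 1 ≤ k)
          omega
        rw [tsum_eq_sum hsupp]
        refine le_trans (Finset.sum_le_card_nsmul _ _ (ENNReal.ofReal C) (fun k _ => by split <;> simp)) ?_
        have hcard : (({⌊t⌋ - 1, ⌊t⌋, ⌊t⌋ + 1} : Finset ℤ)).card ≤ 3 := by
          have h1 := Finset.card_insert_le (⌊t⌋ - 1) ({⌊t⌋, ⌊t⌋ + 1} : Finset ℤ)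
          have h2 := Finset.card_insert_le (⌊t⌋) ({⌊t⌋ + 1} : Finset ℤ)
          have h3 : ({⌊t⌋ + 1} : Finset ℤ).card = 1 := Finset.card_singleton _
          omega
        calc (({⌊t⌋ - 1, ⌊t⌋, ⌊t⌋ + 1} : Finset ℤ)).card • ENNReal.ofReal C
            ≤ 3 • ENNReal.ofReal C := nsmul_le_nsmul_left zero_le hcard
          _ = 3 * ENNReal.ofReal C := by rw [nsmul_eq_mul]; norm_num
    _ = ENNReal.ofReal (Mr + 3 * C) := by
        rw [ENNReal.ofReal_add hMr (by positivity), ENNReal.ofReal_mul (by norm_num : (0:ℝ) ≤ 3)]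
        norm_num


lemma summable_abs_int
    (habs : ∀ t : ℝ, ∑' k : ℤ, ENNReal.ofReal |χ (Real.exp (t - (k:ℝ)))| ≤ ENNReal.ofReal B)
    (t : ℝ) : Summable (fun k : ℤ => |χ (Real.exp (t - (k:ℝ)))|) := by
  have hne : (∑' k : ℤ, ENNReal.ofReal |χ (Real.exp (t - (k:ℝ)))|) ≠ ⊤ :=
    ((habs t).trans_lt ENNReal.ofReal_lt_top).ne
  have := ENNReal.summable_toReal hne
  refine this.congr fun k => ?_
  rw [ENNReal.toReal_ofReal (abs_nonneg _)]

lemma summable_nat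
    (habs : ∀ t : ℝ, ∑' k : ℤ, ENNReal.ofReal |χ (Real.exp (t - (k:ℝ)))| ≤ ENNReal.ofReal B)
    (t : ℝ) : Summable (fun n : ℕ => χ (Real.exp (t - ((n:ℝ) + 1)))) := by
  have h1 : Summable (fun n : ℕ => |χ (Real.exp (t - (((n:ℤ) + 1 : ℤ):ℝ)))|) :=
    (summable_abs_int habs t).comp_injective (i := fun n : ℕ => (n:ℤ) + 1) (fun a b h => by simp only [add_left_inj] at h; exact_mod_cast h)
  refine Summable.of_abs (h1.congr fun n => ?_)
  push_cast
  rfl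

lemma nat_sum_ofReal_le
    (habs : ∀ t : ℝ, ∑' k : ℤ, ENNReal.ofReal |χ (Real.exp (t - (k:ℝ)))| ≤ ENNReal.ofReal B)
    (t : ℝ) :
    ∑' n : ℕ, ENNReal.ofReal |χ (Real.exp (t - ((n:ℝ) + 1)))| ≤ ENNReal.ofReal B := by
  refine le_trans (le_of_eq ?_) <|
    (ENNReal.tsum_comp_le_tsum_of_injective (f := fun n : ℕ => (n:ℤ) + 1)
      (fun a b h => by simp only [add_left_inj] at h; exact_mod_cast h) (fun k => ENNReal.ofReal |χ (Real.exp (t - (k:ℝ)))|)).trans (habs t)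
  congr 1 with n
  push_cast
  rfl

lemma Hker_abs_le (hB : 0 ≤ B)
    (habs : ∀ t : ℝ, ∑' k : ℤ, ENNReal.ofReal |χ (Real.exp (t - (k:ℝ)))| ≤ ENNReal.ofReal B)
    (t : ℝ) : |Hker χ t| ≤ B := by
  have hs : Summable (fun n : ℕ => |χ (Real.exp (t - ((n:ℝ) + 1)))|) :=
    (summable_nat habs t).abs
  rw [← Real.norm_eq_abs]
  refine le_trans (norm_tsum_le_tsum_norm ((hs.congr fun n => (Real.norm_eq_abs _).symm))) ?_
  simp only [Real.norm_eq_abs]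
  rw [← ENNReal.ofReal_le_ofReal_iff hB,
    ENNReal.ofReal_tsum_of_nonneg (fun n => abs_nonneg _) hs]
  exact nat_sum_ofReal_le habs t

lemma tail_bound (hν : 0 < ν) (hMr : 0 ≤ Mr)
    (hM : ∀ t : ℝ, ∑' k : ℤ,
      ENNReal.ofReal (|χ (Real.exp (t - (k:ℝ)))| * |(k : ℝ) - t| ^ ν) ≤ ENNReal.ofReal Mr)
    (habs : ∀ t : ℝ, ∑' k : ℤ, ENNReal.ofReal |χ (Real.exp (t - (k:ℝ)))| ≤ ENNReal.ofReal B)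
    (N : ℕ) (hN : 1 ≤ N) {t : ℝ} (ht : t ∈ Icc (0:ℝ) 1) :
    ∑' n : ℕ, |χ (Real.exp (t - (((n:ℝ) + (N:ℝ)) + 1)))| ≤ Mr / (N:ℝ) ^ ν := by
  have hNpos : (0:ℝ) < (N:ℝ) ^ ν := Real.rpow_pos_of_pos (by exact_mod_cast hN) ν
  have hsum : Summable (fun n : ℕ => |χ (Real.exp (t - (((n:ℝ) + (N:ℝ)) + 1)))|) := by
    have := (summable_abs_int habs t).comp_injective
      (i := fun n : ℕ => (n:ℤ) + (N:ℤ) + 1) (fun a b h => by simp only [add_left_inj] at h; exact_mod_cast h)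
    refine this.congr fun n => ?_
    push_cast
    norm_num
  have key : ENNReal.ofReal ((N:ℝ) ^ ν) *
      (∑' n : ℕ, ENNReal.ofReal |χ (Real.exp (t - (((n:ℝ) + (N:ℝ)) + 1)))|) ≤
      ENNReal.ofReal Mr := by
    have step1 : ∀ n : ℕ, ENNReal.ofReal ((N:ℝ) ^ ν) *
        ENNReal.ofReal |χ (Real.exp (t - (((n:ℝ) + (N:ℝ)) + 1)))| ≤
        (fun k : ℤ => ENNReal.ofReal (|χ (Real.exp (t - (k:ℝ)))| * |(k:ℝ) - t| ^ ν))
          ((n:ℤ) + (N:ℤ) + 1) := by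
      intro n
      simp only
      rw [← ENNReal.ofReal_mul hNpos.le]
      refine ENNReal.ofReal_le_ofReal ?_
      push_cast
      rw [mul_comm]
      refine mul_le_mul_of_nonneg_left ?_ (abs_nonneg _)
      have h0n : (0:ℝ) ≤ (n:ℝ) := Nat.cast_nonneg n
      have ht2 := ht.2
      have h1 : (N:ℝ) ≤ |(n:ℝ) + (N:ℝ) + 1 - t| := by
        rw [abs_of_nonneg (by linarith)]
        linarith
      exact Real.rpow_le_rpow (Nat.cast_nonneg N) h1 hν.le
    calc ENNReal.ofReal ((N:ℝ) ^ ν) *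
        ∑' n : ℕ, ENNReal.ofReal |χ (Real.exp (t - (((n:ℝ) + (N:ℝ)) + 1)))|
        = ∑' n : ℕ, ENNReal.ofReal ((N:ℝ) ^ ν) *
            ENNReal.ofReal |χ (Real.exp (t - (((n:ℝ) + (N:ℝ)) + 1)))| := ENNReal.tsum_mul_left.symm
      _ ≤ ∑' n : ℕ, (fun k : ℤ => ENNReal.ofReal (|χ (Real.exp (t - (k:ℝ)))| * |(k:ℝ) - t| ^ ν))
            ((n:ℤ) + (N:ℤ) + 1) := ENNReal.tsum_le_tsum step1
      _ ≤ ∑' k : ℤ, ENNReal.ofReal (|χ (Real.exp (t - (k:ℝ)))| * |(k:ℝ) - t| ^ ν) :=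
          ENNReal.tsum_comp_le_tsum_of_injective
            (fun a b h => by simp only [add_left_inj] at h; exact_mod_cast h) _
      _ ≤ ENNReal.ofReal Mr := hM t
  rw [← ENNReal.ofReal_le_ofReal_iff (by positivity),
    ENNReal.ofReal_tsum_of_nonneg (fun n => abs_nonneg _) hsum,
    ENNReal.ofReal_div_of_pos hNpos]
  rw [ENNReal.le_div_iff_mul_le (Or.inl (by simp [hNpos.ne', ENNReal.ofReal_eq_zero]; linarith))
    (Or.inl ENNReal.ofReal_ne_top), mul_comm]
  exact key

lemma psiMinus_eq_Hker {t : ℝ} (h0 : 0 ≤ t) (h1 : t < 1) :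
    psiMinus χ (Real.exp t) = Hker χ t := by
  have hlog : Real.log (Real.exp t) = t := Real.log_exp t
  have hmem : ∀ n : ℕ, Real.log (Real.exp t) < ((((n:ℤ) + 1) : ℤ) : ℝ) := by
    intro n
    rw [hlog]; push_cast
    have : (0:ℝ) ≤ (n:ℝ) := Nat.cast_nonneg n
    linarith
  have hli : Function.LeftInverse (fun k : {k : ℤ // Real.log (Real.exp t) < (k : ℝ)} =>
      (k.1 - 1).toNat) (fun n : ℕ => (⟨(n:ℤ) + 1, hmem n⟩ :
        {k : ℤ // Real.log (Real.exp t) < (k : ℝ)})) := fun n => by simp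
  have hri : Function.RightInverse (fun k : {k : ℤ // Real.log (Real.exp t) < (k : ℝ)} =>
      (k.1 - 1).toNat) (fun n : ℕ => (⟨(n:ℤ) + 1, hmem n⟩ :
        {k : ℤ // Real.log (Real.exp t) < (k : ℝ)})) := by
    intro k
    have hk2 : t < (k.1 : ℝ) := by simpa using k.2
    have h0k : (0:ℝ) < (k.1 : ℝ) := lt_of_le_of_lt h0 hk2
    have h0k' : 0 < k.1 := by exact_mod_cast h0k
    apply Subtype.ext
    simp only
    rw [Int.toNat_of_nonneg (by omega)]
    omega
  rw [psiMinus, ← Equiv.tsum_eq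
    (⟨fun n : ℕ => ⟨(n:ℤ) + 1, hmem n⟩, fun k => (k.1 - 1).toNat, hli, hri⟩ :
      ℕ ≃ {k : ℤ // Real.log (Real.exp t) < (k : ℝ)})
    (fun k => χ (Real.exp t * Real.exp (-(k.1 : ℝ)))), Hker]
  simp only [Equiv.coe_fn_mk]
  refine tsum_congr fun n => ?_
  congr 1
  rw [← Real.exp_add]
  congr 1
  push_cast
  ring

lemma Hker_continuousOn (hcont : ContinuousOn χ (Ioi 0)) (hν : 0 < ν) (hMr : 0 ≤ Mr)
    (hM : ∀ t : ℝ, ∑' k : ℤ,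
      ENNReal.ofReal (|χ (Real.exp (t - (k:ℝ)))| * |(k : ℝ) - t| ^ ν) ≤ ENNReal.ofReal Mr)
    (habs : ∀ t : ℝ, ∑' k : ℤ, ENNReal.ofReal |χ (Real.exp (t - (k:ℝ)))| ≤ ENNReal.ofReal B) :
    ContinuousOn (Hker χ) (Icc (0:ℝ) 1) := by
  have hterm : ∀ n : ℕ, Continuous fun t : ℝ => χ (Real.exp (t - ((n:ℝ) + 1))) := by
    intro n
    refine continuous_iff_continuousAt.2 fun t => ?_
    have hce : Continuous fun t : ℝ => Real.exp (t - ((n:ℝ) + 1)) :=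
      Real.continuous_exp.comp (continuous_sub_right _)
    exact ContinuousAt.comp (g := χ) (hcont.continuousAt (Ioi_mem_nhds (Real.exp_pos _))) hce.continuousAt
  have huni : TendstoUniformlyOn
      (fun N t => ∑ n ∈ Finset.range N, χ (Real.exp (t - ((n:ℝ) + 1))))
      (Hker χ) atTop (Icc (0:ℝ) 1) := by
    rw [Metric.tendstoUniformlyOn_iff]
    intro ε hε
    have hlim : Tendsto (fun N : ℕ => Mr / (N:ℝ) ^ ν) atTop (nhds 0) :=
      Tendsto.div_atTop tendsto_const_nhds
        ((tendsto_rpow_atTop hν).comp tendsto_natCast_atTop_atTop)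
    filter_upwards [hlim.eventually (gt_mem_nhds hε), eventually_ge_atTop 1] with N hNε hN1 t ht
    have hsum := summable_nat habs t
    have hsplit := Summable.sum_add_tsum_nat_add (f := fun n : ℕ => χ (Real.exp (t - ((n:ℝ) + 1)))) N hsum
    rw [Real.dist_eq]
    have heq : Hker χ t - (∑ n ∈ Finset.range N, χ (Real.exp (t - ((n:ℝ) + 1)))) =
        ∑' n : ℕ, χ (Real.exp (t - ((((n + N : ℕ)):ℝ) + 1))) := by
      rw [Hker, ← hsplit]; ring
    rw [heq]
    have htail : |∑' n : ℕ, χ (Real.exp (t - ((((n + N : ℕ)):ℝ) + 1)))| ≤ Mr / (N:ℝ) ^ ν := by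
      have hs2 : Summable fun n : ℕ => |χ (Real.exp (t - (((n:ℝ) + (N:ℝ)) + 1)))| := by
        refine (hsum.comp_injective (i := fun n : ℕ => n + N) (add_left_injective N)).abs.congr
          fun n => ?_
        push_cast
        norm_num
      calc |∑' n : ℕ, χ (Real.exp (t - ((((n + N : ℕ)):ℝ) + 1)))|
          = |∑' n : ℕ, χ (Real.exp (t - (((n:ℝ) + (N:ℝ)) + 1)))| := by
            congr 1; exact tsum_congr fun n => by push_cast; ring_nf
        _ ≤ ∑' n : ℕ, |χ (Real.exp (t - (((n:ℝ) + (N:ℝ)) + 1)))| := by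
            rw [← Real.norm_eq_abs]
            refine le_trans (norm_tsum_le_tsum_norm (hs2.congr fun n =>
              (Real.norm_eq_abs _).symm)) ?_
            simp only [Real.norm_eq_abs]
            exact le_rfl
        _ ≤ Mr / (N:ℝ) ^ ν := tail_bound hν hMr hM habs N hN1 ht
    exact lt_of_le_of_lt htail hNε
  exact huni.continuousOn (Frequently.of_forall fun N =>
    (continuous_finset_sum _ fun n _ => hterm n).continuousOn)

-- continuity of each term
lemma term_cont (hcont : ContinuousOn χ (Ioi 0)) (c : ℝ) :
    Continuous fun t : ℝ => χ (Real.exp (t - c)) := by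
  refine continuous_iff_continuousAt.2 fun t => ?_
  have hce : Continuous fun t : ℝ => Real.exp (t - c) :=
    Real.continuous_exp.comp (continuous_sub_right _)
  exact ContinuousAt.comp (g := χ) (hcont.continuousAt (Ioi_mem_nhds (Real.exp_pos _)))
    hce.continuousAt

lemma Iic_eq_iUnion_pieces : Iic (0:ℝ) = ⋃ n : ℕ, Ioc (-(n:ℝ) - 1) (-(n:ℝ)) := by
  ext x
  simp only [mem_Iic, mem_iUnion, mem_Ioc]
  constructor
  · intro hx
    refine ⟨⌊-x⌋.toNat, ?_, ?_⟩
    · have h0 : (0:ℤ) ≤ ⌊-x⌋ := Int.floor_nonneg.2 (by linarith)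
      have hc : ((⌊-x⌋.toNat : ℕ) : ℝ) = ((⌊-x⌋ : ℤ) : ℝ) := by
        rw [← Int.cast_natCast, Int.toNat_of_nonneg h0]
      rw [hc]
      have := Int.lt_floor_add_one (-x)
      linarith
    · have h0 : (0:ℤ) ≤ ⌊-x⌋ := Int.floor_nonneg.2 (by linarith)
      have hc : ((⌊-x⌋.toNat : ℕ) : ℝ) = ((⌊-x⌋ : ℤ) : ℝ) := by
        rw [← Int.cast_natCast, Int.toNat_of_nonneg h0]
      rw [hc]
      have := Int.floor_le (-x)
      linarith
  · rintro ⟨n, _, h2⟩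
    have : (0:ℝ) ≤ (n:ℝ) := Nat.cast_nonneg n
    linarith

lemma pieces_disjoint : Pairwise (Function.onFun Disjoint fun n : ℕ => Ioc (-(n:ℝ) - 1) (-(n:ℝ))) := by
  intro i j hij
  rw [Function.onFun, Set.Ioc_disjoint_Ioc]
  rcases hij.lt_or_gt with h | h
  · refine min_le_of_right_le (le_max_of_le_left ?_)
    have : (i:ℝ) + 1 ≤ (j:ℝ) := by exact_mod_cast h
    linarith
  · refine min_le_of_left_le (le_max_of_le_right ?_)
    have : (j:ℝ) + 1 ≤ (i:ℝ) := by exact_mod_cast h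
    linarith

lemma piece_preimage (n : ℕ) :
    (fun x : ℝ => x - ((n:ℝ) + 1)) ⁻¹' (Ioc (-(n:ℝ) - 1) (-(n:ℝ))) = Ioc (0:ℝ) 1 := by
  ext x
  simp only [mem_preimage, mem_Ioc]
  constructor <;> intro h <;> exact ⟨by linarith [h.1], by linarith [h.2]⟩

lemma lint_sum (hcont : ContinuousOn χ (Ioi 0))
    (habs : ∀ t : ℝ, ∑' k : ℤ, ENNReal.ofReal |χ (Real.exp (t - (k:ℝ)))| ≤ ENNReal.ofReal B) :
    ∑' n : ℕ, ∫⁻ s in Ioc (0:ℝ) 1, ENNReal.ofReal |χ (Real.exp (s - ((n:ℝ) + 1)))| ≤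
      ENNReal.ofReal B := by
  have hmeas : ∀ n : ℕ, AEMeasurable
      (fun s : ℝ => ENNReal.ofReal |χ (Real.exp (s - ((n:ℝ) + 1)))|)
      (volume.restrict (Ioc (0:ℝ) 1)) := by
    intro n
    have : Measurable fun s : ℝ => ENNReal.ofReal ‖χ (Real.exp (s - ((n:ℝ) + 1)))‖ :=
      (term_cont hcont ((n:ℝ)+1)).measurable.norm.ennreal_ofReal
    simpa [Real.norm_eq_abs] using this.aemeasurable
  rw [← lintegral_tsum hmeas]
  calc ∫⁻ s in Ioc (0:ℝ) 1, ∑' n : ℕ, ENNReal.ofReal |χ (Real.exp (s - ((n:ℝ) + 1)))|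
      ≤ ∫⁻ _ in Ioc (0:ℝ) 1, ENNReal.ofReal B := lintegral_mono (fun s => nat_sum_ofReal_le habs s)
    _ = ENNReal.ofReal B := by
        rw [setLIntegral_const, Real.volume_Ioc]
        norm_num

lemma norm_Fk (k : ℤ) (r t : ℝ) :
    ‖(r : ℂ) * Complex.exp (2 * (k:ℂ) * (Real.pi:ℂ) * Complex.I * (t:ℂ))‖ = |r| := by
  rw [norm_mul, Complex.norm_real, Real.norm_eq_abs]
  have harg : 2 * (k:ℂ) * (Real.pi:ℂ) * Complex.I * (t:ℂ) =
      ((2 * (k:ℝ) * Real.pi * t : ℝ) : ℂ) * Complex.I := by push_cast; ring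
  rw [harg, Complex.norm_exp]
  simp [Complex.mul_re]

lemma exp_image_Iio : Real.exp '' (Iio (0:ℝ)) = Ioo (0:ℝ) 1 := by
  ext x
  simp only [mem_image, mem_Iio, mem_Ioo]
  constructor
  · rintro ⟨t, ht, rfl⟩
    exact ⟨Real.exp_pos t, Real.exp_lt_one_iff.mpr ht⟩
  · rintro ⟨h0, h1⟩
    exact ⟨Real.log x, Real.log_neg h0 h1, Real.exp_log h0⟩

lemma cont_Fk (hcont : ContinuousOn χ (Ioi 0)) (k : ℤ) :
    Continuous (fun t : ℝ => (χ (Real.exp t) : ℂ) *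
      Complex.exp (2 * (k:ℂ) * (Real.pi:ℂ) * Complex.I * (t:ℂ))) := by
  have h1 : Continuous fun t : ℝ => χ (Real.exp t) := by
    have := term_cont hcont 0
    simpa using this
  exact (Complex.continuous_ofReal.comp h1).mul
    (Complex.continuous_exp.comp (continuous_const.mul Complex.continuous_ofReal))

lemma lint_Fk (hcont : ContinuousOn χ (Ioi 0))
    (habs : ∀ t : ℝ, ∑' k : ℤ, ENNReal.ofReal |χ (Real.exp (t - (k:ℝ)))| ≤ ENNReal.ofReal B)
    (k : ℤ) :
    ∫⁻ t in Iic (0:ℝ), (‖(χ (Real.exp t) : ℂ) *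
      Complex.exp (2 * (k:ℂ) * (Real.pi:ℂ) * Complex.I * (t:ℂ))‖₊ : ENNReal) ≤
      ENNReal.ofReal B := by
  have h1 : ∀ t : ℝ, ((‖(χ (Real.exp t) : ℂ) *
      Complex.exp (2 * (k:ℂ) * (Real.pi:ℂ) * Complex.I * (t:ℂ))‖₊ : ENNReal)) =
      ENNReal.ofReal |χ (Real.exp t)| := fun t => by
    rw [← enorm_eq_nnnorm, ← ofReal_norm, norm_Fk]
  calc ∫⁻ t in Iic (0:ℝ), (‖(χ (Real.exp t) : ℂ) *
        Complex.exp (2 * (k:ℂ) * (Real.pi:ℂ) * Complex.I * (t:ℂ))‖₊ : ENNReal)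
      = ∫⁻ t in Iic (0:ℝ), ENNReal.ofReal |χ (Real.exp t)| := by
        exact lintegral_congr h1
    _ = ∑' n : ℕ, ∫⁻ t in Ioc (-(n:ℝ) - 1) (-(n:ℝ)), ENNReal.ofReal |χ (Real.exp t)| := by
        rw [Iic_eq_iUnion_pieces, lintegral_iUnion (fun n => measurableSet_Ioc) pieces_disjoint]
    _ = ∑' n : ℕ, ∫⁻ s in Ioc (0:ℝ) 1, ENNReal.ofReal |χ (Real.exp (s - ((n:ℝ) + 1)))| := by
        refine tsum_congr fun n => ?_
        rw [← MeasurePreserving.setLIntegral_comp_preimage_emb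
          (measurePreserving_sub_right volume ((n:ℝ) + 1))
          (MeasurableEquiv.subRight ((n:ℝ) + 1)).measurableEmbedding
          (fun t => ENNReal.ofReal |χ (Real.exp t)|) (Ioc (-(n:ℝ) - 1) (-(n:ℝ))),
          piece_preimage n]
    _ ≤ ENNReal.ofReal B := lint_sum hcont habs

lemma integrableOn_Fk (hcont : ContinuousOn χ (Ioi 0))
    (habs : ∀ t : ℝ, ∑' k : ℤ, ENNReal.ofReal |χ (Real.exp (t - (k:ℝ)))| ≤ ENNReal.ofReal B)
    (k : ℤ) : IntegrableOn
      (fun t : ℝ => (χ (Real.exp t) : ℂ) *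
        Complex.exp (2 * (k:ℂ) * (Real.pi:ℂ) * Complex.I * (t:ℂ))) (Iic (0:ℝ)) := by
  refine ⟨(cont_Fk hcont k).aestronglyMeasurable.restrict, ?_⟩
  rw [HasFiniteIntegral]
  exact lt_of_le_of_lt (lint_Fk hcont habs k) ENNReal.ofReal_lt_top


lemma mellin_eq (hcont : ContinuousOn χ (Ioi 0))
    (habs : ∀ t : ℝ, ∑' k : ℤ, ENNReal.ofReal |χ (Real.exp (t - (k:ℝ)))| ≤ ENNReal.ofReal B)
    (k : ℤ) :
    (∫ u in Ioo (0:ℝ) 1, (χ u : ℂ) *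
      Complex.exp (2 * (k:ℂ) * (Real.pi:ℂ) * Complex.I * (Real.log u : ℂ)) / (u : ℂ)) =
    ∫ s in Ioc (0:ℝ) 1, (Hker χ s : ℂ) *
      Complex.exp (2 * (k:ℂ) * (Real.pi:ℂ) * Complex.I * (s : ℂ)) := by
  set Fk : ℝ → ℂ := fun t => (χ (Real.exp t) : ℂ) *
    Complex.exp (2 * (k:ℂ) * (Real.pi:ℂ) * Complex.I * (t:ℂ)) with hFk
  -- step 1 : change of variables u = exp t
  have step1 : (∫ u in Ioo (0:ℝ) 1, (χ u : ℂ) *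
      Complex.exp (2 * (k:ℂ) * (Real.pi:ℂ) * Complex.I * (Real.log u : ℂ)) / (u : ℂ)) =
      ∫ t in Iio (0:ℝ), Fk t := by
    rw [← exp_image_Iio, integral_image_eq_integral_abs_deriv_smul measurableSet_Iio
      (fun x _ => (Real.hasDerivAt_exp x).hasDerivWithinAt) Real.exp_injective.injOn]
    refine setIntegral_congr_fun measurableSet_Iio fun t _ => ?_
    have hne : ((Real.exp t : ℝ) : ℂ) ≠ 0 := by
      exact_mod_cast Complex.ofReal_ne_zero.mpr (Real.exp_pos t).ne'
    rw [Real.log_exp, abs_of_pos (Real.exp_pos t), Complex.real_smul, hFk]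
    field_simp
  rw [step1, setIntegral_congr_set Iio_ae_eq_Iic, Iic_eq_iUnion_pieces,
    integral_iUnion (fun n => measurableSet_Ioc) pieces_disjoint
      (by rw [← Iic_eq_iUnion_pieces]; exact integrableOn_Fk hcont habs k)]
  -- step 2 : each piece
  have step2 : ∀ n : ℕ, (∫ t in Ioc (-(n:ℝ) - 1) (-(n:ℝ)), Fk t) =
      ∫ s in Ioc (0:ℝ) 1, (χ (Real.exp (s - ((n:ℝ) + 1))) : ℂ) *
        Complex.exp (2 * (k:ℂ) * (Real.pi:ℂ) * Complex.I * (s:ℂ)) := by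
    intro n
    rw [← MeasurePreserving.setIntegral_preimage_emb
      (measurePreserving_sub_right volume ((n:ℝ) + 1))
      (MeasurableEquiv.subRight ((n:ℝ) + 1)).measurableEmbedding Fk
      (Ioc (-(n:ℝ) - 1) (-(n:ℝ))), piece_preimage n]
    refine setIntegral_congr_fun measurableSet_Ioc fun s _ => ?_
    rw [hFk]
    simp only
    congr 1
    have harg : 2 * (k:ℂ) * (Real.pi:ℂ) * Complex.I * ((s - ((n:ℝ) + 1) : ℝ) : ℂ) =
        2 * (k:ℂ) * (Real.pi:ℂ) * Complex.I * (s:ℂ) +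
          ((-(k * ((n:ℤ) + 1)) : ℤ) : ℂ) * (2 * (Real.pi:ℂ) * Complex.I) := by
      push_cast
      ring
    rw [harg, Complex.exp_add, Complex.exp_int_mul_two_pi_mul_I, mul_one]
  rw [tsum_congr step2]
  -- step 3 : swap sum and integral
  have hmeas : ∀ n : ℕ, AEStronglyMeasurable
      (fun s : ℝ => (χ (Real.exp (s - ((n:ℝ) + 1))) : ℂ) *
        Complex.exp (2 * (k:ℂ) * (Real.pi:ℂ) * Complex.I * (s:ℂ)))
      (volume.restrict (Ioc (0:ℝ) 1)) := fun n =>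
    ((Complex.continuous_ofReal.comp (term_cont hcont ((n:ℝ) + 1))).mul
      (Complex.continuous_exp.comp
        (continuous_const.mul Complex.continuous_ofReal))).aestronglyMeasurable.restrict
  have hlt : (∑' n : ℕ, ∫⁻ s in Ioc (0:ℝ) 1,
      (‖(χ (Real.exp (s - ((n:ℝ) + 1))) : ℂ) *
        Complex.exp (2 * (k:ℂ) * (Real.pi:ℂ) * Complex.I * (s:ℂ))‖₊ : ENNReal)) ≠ ⊤ := by
    refine ne_of_lt (lt_of_le_of_lt (le_of_eq ?_) (lt_of_le_of_lt (lint_sum hcont habs)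
      ENNReal.ofReal_lt_top))
    refine tsum_congr fun n => ?_
    refine lintegral_congr fun s => ?_
    rw [← enorm_eq_nnnorm, ← ofReal_norm, norm_Fk]
  rw [← integral_tsum hmeas hlt]
  -- step 4 : identify the sum with Hker
  refine setIntegral_congr_fun measurableSet_Ioc fun s _ => ?_
  rw [tsum_mul_right]
  congr 1
  rw [Hker, Complex.ofReal_tsum]

lemma unit_integral (k : ℤ) :
    (∫ s in Ioc (0:ℝ) 1, Complex.exp (2 * (k:ℂ) * (Real.pi:ℂ) * Complex.I * (s:ℂ))) =
      if k = 0 then 1 else 0 := by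
  rw [← intervalIntegral.integral_of_le (zero_le_one : (0:ℝ) ≤ 1)]
  by_cases hk : k = 0
  · subst hk
    simp
  · rw [if_neg hk]
    have hc : (2 * (k:ℂ) * (Real.pi:ℂ) * Complex.I) ≠ 0 := by
      apply mul_ne_zero
      apply mul_ne_zero
      apply mul_ne_zero
      · norm_num
      · exact_mod_cast Int.cast_ne_zero.mpr hk
      · exact_mod_cast Complex.ofReal_ne_zero.mpr Real.pi_ne_zero
      · exact Complex.I_ne_zero
    have := integral_exp_mul_complex (a := 0) (b := 1) hc
    rw [this]
    have h1 : 2 * (k:ℂ) * (Real.pi:ℂ) * Complex.I * ((1:ℝ):ℂ) =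
        (k:ℂ) * (2 * (Real.pi:ℂ) * Complex.I) := by push_cast; ring
    have h0 : 2 * (k:ℂ) * (Real.pi:ℂ) * Complex.I * ((0:ℝ):ℂ) = 0 := by push_cast; ring
    rw [h1, h0, Complex.exp_int_mul_two_pi_mul_I, Complex.exp_zero, sub_self, zero_div]

lemma fourier_unique {f : ℝ → ℂ} (hmeas : Measurable ((Ioc (0:ℝ) (0+1)).restrict f)) {C : ℝ}
    (hbd : ∀ x, ‖f x‖ ≤ C)
    (hcoef : ∀ n : ℤ, (∫ s in Ioc (0:ℝ) 1,
      f s * Complex.exp (2 * (n:ℂ) * (Real.pi:ℂ) * Complex.I * (s:ℂ))) = 0) :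
    ∀ᵐ s ∂(volume.restrict (Ioc (0:ℝ) 1)), f s = 0 := by
  haveI : Fact ((0:ℝ) < 1) := ⟨zero_lt_one⟩
  set G : AddCircle (1:ℝ) → ℂ := AddCircle.liftIoc 1 0 f with hG
  have hGmeas : Measurable G :=
    hmeas.comp (AddCircle.measurableEquivIoc 1 0).measurable
  have hGbd : ∀ x, ‖G x‖ ≤ C := fun x => hbd _
  have hmem : MemLp G 2 (@AddCircle.haarAddCircle 1 _) :=
    MemLp.of_bound hGmeas.aestronglyMeasurable C (Eventually.of_forall hGbd)
  set fL := hmem.toLp G with hfL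
  have hcoeff0 : ∀ n : ℤ, fourierCoeff G n = 0 := by
    intro n
    rw [fourierCoeff_eq_intervalIntegral G n 0,
      intervalIntegral.integral_of_le (by norm_num : (0:ℝ) ≤ 0 + 1)]
    have hset : Ioc (0:ℝ) (0+1) = Ioc 0 1 := by norm_num
    have hptw : ∀ x ∈ Ioc (0:ℝ) (0+1), (fourier (-n)) ((x : ℝ) : AddCircle (1:ℝ)) • G ((x:ℝ) : AddCircle (1:ℝ)) =
        f x * Complex.exp (2 * ((-n : ℤ):ℂ) * (Real.pi:ℂ) * Complex.I * (x:ℂ)) := by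
      intro x hx
      rw [hG, AddCircle.liftIoc_coe_apply hx, fourier_coe_apply, smul_eq_mul, mul_comm]
      congr 2
      push_cast
      ring
    rw [setIntegral_congr_fun measurableSet_Ioc hptw, hset, hcoef (-n)]
    simp
  have hreprz : fourierBasis.repr fL = 0 := by
    ext n
    rw [fourierBasis_repr]
    have : fourierCoeff (⇑fL) n = fourierCoeff G n := by
      unfold fourierCoeff
      refine integral_congr_ae ?_
      filter_upwards [hmem.coeFn_toLp] with x hx
      rw [hfL, hx]
    simp only [this, hcoeff0 n]
    rfl
  have hfL0 : fL = 0 := by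
    have := fourierBasis.repr.map_eq_zero_iff (x := fL)
    exact this.mp hreprz
  have hGae : G =ᵐ[@AddCircle.haarAddCircle 1 _] 0 := by
    refine (hmem.coeFn_toLp.symm).trans ?_
    rw [← hfL, hfL0]
    exact Lp.coeFn_zero _ _ _
  have hvol : (volume : Measure (AddCircle (1:ℝ))) = AddCircle.haarAddCircle := by
    rw [AddCircle.volume_eq_smul_haarAddCircle]
    simp
  have hmp := AddCircle.measurePreserving_mk (1:ℝ) 0
  have hcomp : (G ∘ ((↑) : ℝ → AddCircle (1:ℝ))) =ᵐ[volume.restrict (Ioc (0:ℝ) (0+1))]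
      (0 : ℝ → ℂ) := by
    have := hmp.quasiMeasurePreserving.ae_eq_comp (g := G) (g' := (0 : AddCircle (1:ℝ) → ℂ))
      (by rw [hvol]; exact hGae)
    simpa using this
  rw [show Ioc (0:ℝ) 1 = Ioc (0:ℝ) (0+1) by norm_num]
  filter_upwards [hcomp, ae_restrict_mem measurableSet_Ioc] with x hx hxmem
  have : G ((x : ℝ) : AddCircle (1:ℝ)) = f x := AddCircle.liftIoc_coe_apply hxmem
  rw [← this]
  exact hx

end kernelAux

/-- For a continuous kernel `χ` vanishing on `[1, e)`, `ψ_χ⁻ ≡ α` on `[1, e)` iff the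
Mellin-type integrals `∫₀¹ χ(u) u^{2kπi} du/u` equal `α` for `k = 0` and `0` for `k ≠ 0`. -/
theorem psiMinus_const_iff_mellin_condition
    (χ : ℝ → ℝ) (hχ : IsKernel χ) (hcont : ContinuousOn χ (Ioi 0))
    (hzero : ∀ u ∈ Ico (1 : ℝ) (Real.exp 1), χ u = 0) (α : ℝ) :
    (∀ u ∈ Ico (1 : ℝ) (Real.exp 1), psiMinus χ u = α) ↔
      ∀ k : ℤ,
        (∫ u in Ioo (0 : ℝ) 1,
          (χ u : ℂ) * Complex.exp (2 * (k : ℂ) * (Real.pi : ℂ) * Complex.I * (Real.log u : ℂ)) / (u : ℂ))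
        = if k = 0 then (α : ℂ) else 0 := by
  obtain ⟨ν, hν, Mr, hMr, hM⟩ := moment_t hχ.moment
  obtain ⟨C, hC0, hCb⟩ := bound_mid hχ.bounded
  set B : ℝ := Mr + 3 * C with hB
  have hB0 : 0 ≤ B := by positivity
  have habs : ∀ t : ℝ, ∑' k : ℤ, ENNReal.ofReal |χ (Real.exp (t - (k:ℝ)))| ≤
      ENNReal.ofReal B := fun t => abs_sum_bound hν hMr hC0 hM hCb t
  have hHcont : ContinuousOn (Hker χ) (Icc (0:ℝ) 1) := Hker_continuousOn hcont hν hMr hM habs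
  constructor
  · -- forward
    intro h k
    rw [mellin_eq hcont habs k]
    have hH : ∀ s ∈ Ioo (0:ℝ) 1, Hker χ s = α := by
      intro s hs
      rw [← psiMinus_eq_Hker hs.1.le hs.2]
      exact h (Real.exp s) ⟨Real.one_le_exp hs.1.le, Real.exp_lt_exp.2 hs.2⟩
    calc (∫ s in Ioc (0:ℝ) 1, (Hker χ s : ℂ) *
          Complex.exp (2 * (k:ℂ) * (Real.pi:ℂ) * Complex.I * (s : ℂ)))
        = ∫ s in Ioo (0:ℝ) 1, (Hker χ s : ℂ) *
          Complex.exp (2 * (k:ℂ) * (Real.pi:ℂ) * Complex.I * (s : ℂ)) :=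
          integral_Ioc_eq_integral_Ioo
      _ = ∫ s in Ioo (0:ℝ) 1, (α : ℂ) *
          Complex.exp (2 * (k:ℂ) * (Real.pi:ℂ) * Complex.I * (s : ℂ)) := by
          refine setIntegral_congr_fun measurableSet_Ioo fun s hs => ?_
          rw [hH s hs]
      _ = (α : ℂ) * ∫ s in Ioc (0:ℝ) 1,
          Complex.exp (2 * (k:ℂ) * (Real.pi:ℂ) * Complex.I * (s : ℂ)) := by
          rw [← integral_Ioc_eq_integral_Ioo, integral_const_mul]
      _ = if k = 0 then (α : ℂ) else 0 := by
          rw [unit_integral k]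
          split_ifs <;> simp
  · -- backward
    intro h
    have hint : ∀ k : ℤ, (∫ s in Ioc (0:ℝ) 1, (Hker χ s : ℂ) *
        Complex.exp (2 * (k:ℂ) * (Real.pi:ℂ) * Complex.I * (s : ℂ))) =
        if k = 0 then (α : ℂ) else 0 := fun k => by rw [← mellin_eq hcont habs k]; exact h k
    set f : ℝ → ℂ := fun s => (Hker χ s : ℂ) - (α : ℂ) with hf
    have hintH : ∀ k : ℤ, IntegrableOn (fun s : ℝ => (Hker χ s : ℂ) *
        Complex.exp (2 * (k:ℂ) * (Real.pi:ℂ) * Complex.I * (s : ℂ))) (Ioc (0:ℝ) 1) := by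
      intro k
      refine IntegrableOn.mono_set ?_ Ioc_subset_Icc_self
      refine ContinuousOn.integrableOn_Icc ?_
      exact ((Complex.continuous_ofReal.comp_continuousOn hHcont).mul
        ((Complex.continuous_exp.comp
          (continuous_const.mul Complex.continuous_ofReal)).continuousOn))
    have hintA : ∀ k : ℤ, IntegrableOn (fun s : ℝ => (α : ℂ) *
        Complex.exp (2 * (k:ℂ) * (Real.pi:ℂ) * Complex.I * (s : ℂ))) (Ioc (0:ℝ) 1) := by
      intro k
      refine IntegrableOn.mono_set ?_ Ioc_subset_Icc_self
      refine ContinuousOn.integrableOn_Icc ?_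
      exact (continuous_const.mul (Complex.continuous_exp.comp
        (continuous_const.mul Complex.continuous_ofReal))).continuousOn
    have hcoef : ∀ n : ℤ, (∫ s in Ioc (0:ℝ) 1,
        f s * Complex.exp (2 * (n:ℂ) * (Real.pi:ℂ) * Complex.I * (s:ℂ))) = 0 := by
      intro n
      have heq : ∀ s : ℝ, f s * Complex.exp (2 * (n:ℂ) * (Real.pi:ℂ) * Complex.I * (s:ℂ)) =
          (Hker χ s : ℂ) * Complex.exp (2 * (n:ℂ) * (Real.pi:ℂ) * Complex.I * (s:ℂ)) -
          (α : ℂ) * Complex.exp (2 * (n:ℂ) * (Real.pi:ℂ) * Complex.I * (s:ℂ)) := by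
        intro s; rw [hf]; ring
      simp only [heq]
      rw [integral_sub (hintH n) (hintA n), hint n, integral_const_mul, unit_integral n]
      split_ifs <;> simp
    have hfbd : ∀ x : ℝ, ‖f x‖ ≤ B + |α| := by
      intro x
      rw [hf]
      refine le_trans (norm_sub_le _ _) ?_
      rw [Complex.norm_real, Complex.norm_real, Real.norm_eq_abs, Real.norm_eq_abs]
      exact add_le_add (Hker_abs_le hB0 habs x) le_rfl
    have hfmeas : Measurable ((Ioc (0:ℝ) (0+1)).restrict f) := by
      have h1 : ContinuousOn f (Icc (0:ℝ) 1) :=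
        (Complex.continuous_ofReal.comp_continuousOn hHcont).sub continuousOn_const
      have h2 : ContinuousOn f (Ioc (0:ℝ) (0+1)) := by
        refine h1.mono ?_
        rw [zero_add]
        exact Ioc_subset_Icc_self
      exact h2.restrict.measurable
    have hae := fourier_unique hfmeas hfbd hcoef
    have hnull : volume ({s : ℝ | Hker χ s ≠ α} ∩ Ioc (0:ℝ) 1) = 0 := by
      have h1 : {s : ℝ | ¬ f s = 0} ∩ Ioc (0:ℝ) 1 = {s : ℝ | Hker χ s ≠ α} ∩ Ioc (0:ℝ) 1 := by
        ext s
        simp only [mem_inter_iff, mem_setOf_eq, hf, sub_eq_zero, and_congr_left_iff]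
        intro _
        constructor
        · intro hne hc; exact hne (by exact_mod_cast hc)
        · intro hne hc; exact hne (by exact_mod_cast hc)
      rw [← h1]
      have h2 : ∀ᵐ s ∂(volume.restrict (Ioc (0:ℝ) 1)), f s = 0 := hae
      rw [ae_iff, Measure.restrict_apply' measurableSet_Ioc] at h2
      exact h2
    -- pointwise equality on [0,1)
    have hpt : ∀ t₀ ∈ Ico (0:ℝ) 1, Hker χ t₀ = α := by
      intro t₀ ht₀
      set S : Set ℝ := {s : ℝ | Hker χ s = α} ∩ Ioc (0:ℝ) 1 with hS
      have hclos : t₀ ∈ closure S := by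
        rw [Metric.mem_closure_iff]
        intro ε hε
        by_contra hcon
        push_neg at hcon
        set δ : ℝ := min ε (1 - t₀) with hδ
        have hδ0 : 0 < δ := lt_min hε (by linarith [ht₀.2])
        have hsub : Ioo t₀ (t₀ + δ) ⊆ {s : ℝ | Hker χ s ≠ α} ∩ Ioc (0:ℝ) 1 := by
          intro s hs
          have hs1 : t₀ < s := hs.1
          have hs2 : s < t₀ + δ := hs.2
          have hIoc : s ∈ Ioc (0:ℝ) 1 := by
            constructor
            · exact lt_of_le_of_lt ht₀.1 hs1
            · have : δ ≤ 1 - t₀ := min_le_right _ _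
              linarith
          refine ⟨fun hEq => ?_, hIoc⟩
          have hd := hcon s ⟨hEq, hIoc⟩
          rw [Real.dist_eq, abs_sub_comm, abs_of_nonneg (by linarith)] at hd
          have : δ ≤ ε := min_le_left _ _
          linarith
        have hle := measure_mono (μ := (volume : Measure ℝ)) hsub
        rw [hnull] at hle
        have : volume (Ioo t₀ (t₀ + δ)) = 0 := le_antisymm hle zero_le
        rw [Real.volume_Ioo] at this
        simp only [add_sub_cancel_left] at this
        rw [ENNReal.ofReal_eq_zero] at this
        linarith
      have hne : (nhdsWithin t₀ S).NeBot := mem_closure_iff_nhdsWithin_neBot.mp hclos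
      have htend1 : Tendsto (Hker χ) (nhdsWithin t₀ S) (nhds (Hker χ t₀)) := by
        have h1 : ContinuousWithinAt (Hker χ) (Icc (0:ℝ) 1) t₀ :=
          hHcont t₀ ⟨ht₀.1, ht₀.2.le⟩
        exact h1.mono (fun s hs => ⟨hs.2.1.le, hs.2.2⟩)
      have htend2 : Tendsto (Hker χ) (nhdsWithin t₀ S) (nhds α) := by
        refine Tendsto.congr' ?_ tendsto_const_nhds
        filter_upwards [eventually_mem_nhdsWithin] with s hs
        exact hs.1.symm
      exact tendsto_nhds_unique htend1 htend2
    intro u hu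
    have upos : (0:ℝ) < u := lt_of_lt_of_le zero_lt_one hu.1
    have hlog0 : 0 ≤ Real.log u := Real.log_nonneg hu.1
    have hlog1 : Real.log u < 1 := (Real.log_lt_iff_lt_exp upos).mpr (by simpa using hu.2)
    have : psiMinus χ u = psiMinus χ (Real.exp (Real.log u)) := by rw [Real.exp_log upos]
    rw [this, psiMinus_eq_Hker hlog0 hlog1]
    exact hpt (Real.log u) ⟨hlog0, hlog1⟩
end

section
/- Let χ: ℝ⁺ → ℝ be a kernel and let f: ℝ⁺ → ℝ be a bounded measurable function with a removable discontinuity at t ∈ ℝ⁺, i.e., f(t+0) and f(t−0) both exist, are finite, and are equal to a common value ℓ. Then lim_{w→∞} (I_w^χ f)(t) = ℓ. -/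
open Real MeasureTheory Filter Set

lemma kernel_moment_sum {χ : ℝ → ℝ} {ν : ℝ} (hM : absMoment χ ν ≠ ⊤)
    {u : ℝ} (hu : 0 < u) :
    Summable (fun k : ℤ => |χ (Real.exp (-(k : ℝ)) * u)| * |(k : ℝ) - Real.log u| ^ ν) ∧
    ∑' k : ℤ, |χ (Real.exp (-(k : ℝ)) * u)| * |(k : ℝ) - Real.log u| ^ ν
      ≤ (absMoment χ ν).toReal := by
  set F : ℤ → ℝ := fun k => |χ (Real.exp (-(k : ℝ)) * u)| * |(k : ℝ) - Real.log u| ^ ν with hF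
  have hFnn : ∀ k, 0 ≤ F k := fun k =>
    mul_nonneg (abs_nonneg _) (Real.rpow_nonneg (abs_nonneg _) ν)
  have h1 : ∑' k : ℤ, ENNReal.ofReal (F k) ≤ absMoment χ ν := by
    exact le_iSup (fun v : {x : ℝ // 0 < x} => ∑' k : ℤ,
      ENNReal.ofReal (|χ (Real.exp (-(k : ℝ)) * v.1)| * |(k : ℝ) - Real.log v.1| ^ ν)) ⟨u, hu⟩
  have hne : ∑' k : ℤ, ENNReal.ofReal (F k) ≠ ⊤ := fun h => hM (top_le_iff.mp (h ▸ h1))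
  have hsumm : Summable F := by
    have := ENNReal.summable_toReal hne
    refine this.congr fun k => ?_
    rw [ENNReal.toReal_ofReal (hFnn k)]
  refine ⟨hsumm, ?_⟩
  have h2 : ENNReal.ofReal (∑' k, F k) ≤ absMoment χ ν := by
    rw [ENNReal.ofReal_tsum_of_nonneg hFnn hsumm]; exact h1
  exact (ENNReal.ofReal_le_iff_le_toReal hM).mp h2

lemma kernel_abs_sum_aux {χ : ℝ → ℝ} {C ν : ℝ} {Mν : ℝ}
    (hC : ∀ v ∈ Icc (Real.exp (-1)) (Real.exp 1), |χ v| ≤ C) (hν : 0 < ν)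
    {u : ℝ} (hu : 0 < u)
    (hsumF : Summable (fun k : ℤ => |χ (Real.exp (-(k : ℝ)) * u)| * |(k : ℝ) - Real.log u| ^ ν))
    (htsumF : ∑' k : ℤ, |χ (Real.exp (-(k : ℝ)) * u)| * |(k : ℝ) - Real.log u| ^ ν ≤ Mν) :
    Summable (fun k : ℤ => |χ (Real.exp (-(k : ℝ)) * u)|) ∧
    ∑' k : ℤ, |χ (Real.exp (-(k : ℝ)) * u)| ≤ 3 * max C 0 + Mν := by
  set L := Real.log u with hL
  set g : ℤ → ℝ := fun k => |χ (Real.exp (-(k : ℝ)) * u)| with hg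
  set F : ℤ → ℝ := fun k => g k * |(k : ℝ) - L| ^ ν with hF
  set S : Finset ℤ := Finset.Icc ⌊L⌋ (⌊L⌋ + 1) with hS
  set h : ℤ → ℝ := fun k => Set.indicator (↑S) (fun _ => max C 0) k + F k with hh
  have hFnn : ∀ k, 0 ≤ F k := fun k =>
    mul_nonneg (abs_nonneg _) (Real.rpow_nonneg (abs_nonneg _) ν)
  have hexp : ∀ k : ℤ, Real.exp (-(k : ℝ)) * u = Real.exp (L - k) := by
    intro k
    rw [Real.exp_sub, hL, Real.exp_log hu, Real.exp_neg]
    ring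
  have hgle : ∀ k, g k ≤ h k := by
    intro k
    by_cases hk : |(k : ℝ) - L| < 1
    · have hmem : k ∈ S := by
        have h1 : (⌊L⌋ : ℝ) ≤ L := Int.floor_le L
        have h2 : L < (⌊L⌋ : ℝ) + 1 := Int.lt_floor_add_one L
        rw [abs_lt] at hk
        rw [hS, Finset.mem_Icc]
        constructor
        · have : (⌊L⌋ : ℝ) - 1 < (k : ℝ) := by linarith [hk.1]
          have : ⌊L⌋ - 1 < k := by exact_mod_cast this
          omega
        · have : (k : ℝ) < (⌊L⌋ : ℝ) + 2 := by linarith [hk.2]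
          have : k < ⌊L⌋ + 2 := by exact_mod_cast this
          omega
      have harg : Real.exp (L - k) ∈ Icc (Real.exp (-1)) (Real.exp 1) := by
        rw [abs_lt] at hk
        constructor
        · exact Real.exp_le_exp.mpr (by linarith [hk.2])
        · exact Real.exp_le_exp.mpr (by linarith [hk.1])
      have hgk : g k ≤ max C 0 := by
        rw [hg]
        simp only []
        rw [hexp k]
        exact (hC _ harg).trans (le_max_left C 0)
      have hind : Set.indicator (↑S) (fun _ => max C 0) k = max C 0 :=
        Set.indicator_of_mem (Finset.mem_coe.mpr hmem) _
      rw [hh]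
      simp only []
      rw [hind]
      linarith [hFnn k]
    · push_neg at hk
      have h1 : (1 : ℝ) ≤ |(k : ℝ) - L| ^ ν := by
        calc (1:ℝ) = 1 ^ ν := (Real.one_rpow ν).symm
        _ ≤ |(k : ℝ) - L| ^ ν := Real.rpow_le_rpow zero_le_one hk hν.le
      have hgF : g k ≤ F k := by
        calc g k = g k * 1 := (mul_one _).symm
        _ ≤ g k * |(k : ℝ) - L| ^ ν := mul_le_mul_of_nonneg_left h1 (abs_nonneg _)
      refine hgF.trans ?_
      rw [hh]
      simp only []
      have : (0:ℝ) ≤ Set.indicator (↑S) (fun _ => max C 0) k :=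
        Set.indicator_nonneg (fun _ _ => le_max_right C 0) k
      linarith
  have hsum_ind : Summable (fun k : ℤ => Set.indicator (↑S) (fun _ => max C 0) k) := by
    apply summable_of_finite_support
    exact Set.Finite.subset S.finite_toSet Set.support_indicator_subset
  have htsum_ind : ∑' k : ℤ, Set.indicator (↑S) (fun _ => max C 0) k ≤ 3 * max C 0 := by
    rw [← tsum_subtype (↑S : Set ℤ) (fun _ => max C 0), Finset.tsum_subtype' S (fun _ => max C 0)]
    rw [Finset.sum_const]
    have hcard : S.card ≤ 3 := by
      rw [hS]
      rw [Int.card_Icc]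
      simp
      omega
    rw [nsmul_eq_mul]
    apply mul_le_mul_of_nonneg_right _ (le_max_right C 0)
    exact_mod_cast hcard
  have hsum_h : Summable h := hsum_ind.add hsumF
  have hgnn : ∀ k, 0 ≤ g k := fun k => abs_nonneg _
  have hsum_g : Summable g := Summable.of_nonneg_of_le hgnn hgle hsum_h
  refine ⟨hsum_g, ?_⟩
  calc ∑' k, g k ≤ ∑' k, h k := Summable.tsum_le_tsum hgle hsum_g hsum_h
    _ = (∑' k : ℤ, Set.indicator (↑S) (fun _ => max C 0) k) + ∑' k, F k :=
        Summable.tsum_add hsum_ind hsumF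
    _ ≤ 3 * max C 0 + Mν := add_le_add htsum_ind htsumF

/-- At a removable discontinuity (both one-sided limits equal `ℓ`),
`I_w^χ f(t) → ℓ` as `w → ∞`. -/
theorem kanto_tendsto_at_removable_discontinuity
    (χ f : ℝ → ℝ) (hχ : IsKernel χ) (hf : Measurable f)
    (hfb : ∃ C, ∀ x : ℝ, 0 < x → |f x| ≤ C)
    (t : ℝ) (ht : 0 < t) (ℓ : ℝ)
    (hplus : Tendsto f (nhdsWithin t (Ioi t)) (nhds ℓ))
    (hminus : Tendsto f (nhdsWithin t (Iio t)) (nhds ℓ)) :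
    Tendsto (fun w => kanto χ f w t) atTop (nhds ℓ) := by
  obtain ⟨Cf, hCf⟩ := hfb
  obtain ⟨C, hC⟩ := hχ.bounded
  obtain ⟨ν, hν, hMfin⟩ := hχ.moment
  have hMne : absMoment χ ν ≠ ⊤ := hMfin.ne
  set Mν : ℝ := (absMoment χ ν).toReal with hMνdef
  have hMνnn : 0 ≤ Mν := ENNReal.toReal_nonneg
  set m0 : ℝ := 3 * max C 0 + Mν with hm0def
  have hm0nn : 0 ≤ m0 := by positivity
  have hCf0 : 0 ≤ Cf := (abs_nonneg _).trans (hCf 1 one_pos)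
  set B : ℝ := Cf + |ℓ| with hBdef
  have hBnn : 0 ≤ B := by positivity
  set L : ℝ := Real.log t with hLdef
  have hexpL : Real.exp L = t := Real.exp_log ht
  set g : ℝ → ℝ := fun u => f (Real.exp u) with hgdef
  have hg_meas : Measurable g := hf.comp Real.measurable_exp
  have hg_bd : ∀ u, |g u| ≤ Cf := fun u => hCf _ (Real.exp_pos u)
  have hgint : ∀ a b : ℝ, IntervalIntegrable g volume a b := by
    intro a b
    constructor <;>
    · apply Measure.integrableOn_of_bounded (M := Cf) (by simp) hg_meas.aestronglyMeasurable
      exact Filter.Eventually.of_forall (fun u => by simpa using hg_bd u)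
  rw [Metric.tendsto_nhds]
  intro ε hε
  set ε' : ℝ := ε / (2 * (m0 + 1)) with hε'def
  have hε' : 0 < ε' := by positivity
  rw [Metric.tendsto_nhdsWithin_nhds] at hplus hminus
  obtain ⟨δa, hδa, hda⟩ := hplus ε' hε'
  obtain ⟨δb, hδb, hdb⟩ := hminus ε' hε'
  obtain ⟨δ', hδ', hd'⟩ := Metric.continuousAt_iff.mp
    (Real.continuous_exp.continuousAt (x := L)) (min δa δb) (lt_min hδa hδb)
  have hsmall : ∀ v : ℝ, v ≠ L → |v - L| < δ' → |g v - ℓ| ≤ ε' := by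
    intro v hv hvd
    have hdist : dist (Real.exp v) t < min δa δb := by
      have := hd' (x := v) (by rwa [Real.dist_eq])
      rwa [hexpL] at this
    rcases lt_or_gt_of_ne hv with h | h
    · have hx : Real.exp v ∈ Iio t := by
        rw [← hexpL]; exact Real.exp_lt_exp.mpr h
      have := hdb hx (lt_of_lt_of_le hdist (min_le_right _ _))
      rw [Real.dist_eq] at this
      exact this.le
    · have hx : Real.exp v ∈ Ioi t := by
        rw [← hexpL]; exact Real.exp_lt_exp.mpr h
      have := hda hx (lt_of_lt_of_le hdist (min_le_left _ _))
      rw [Real.dist_eq] at this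
      exact this.le
  set δ : ℝ := δ' / 2 with hδdef
  have hδ : 0 < δ := by positivity
  -- the quantitative bound
  have key : ∀ w : ℝ, max (2 / δ) 1 ≤ w →
      |kanto χ f w t - ℓ| ≤ ε' * m0 + B / (w * δ / 2) ^ ν * Mν := by
    intro w hw
    have hw1 : (1 : ℝ) ≤ w := le_trans (le_max_right _ _) hw
    have hw0 : (0 : ℝ) < w := lt_of_lt_of_le one_pos hw1
    have hwδ : 2 / δ ≤ w := le_trans (le_max_left _ _) hw
    have h2wδ : 2 ≤ w * δ := by
      rw [div_le_iff₀ hδ] at hwδ; linarith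
    have hwinv : 1 / w ≤ δ / 2 := by
      rw [div_le_div_iff₀ hw0 two_pos]; linarith
    set u₀ : ℝ := t ^ w with hu₀def
    have hu₀ : 0 < u₀ := Real.rpow_pos_of_pos ht w
    have hlogu₀ : Real.log u₀ = w * L := Real.log_rpow ht w
    set a : ℤ → ℝ := fun k => χ (Real.exp (-(k : ℝ)) * u₀) with hadef
    obtain ⟨hsumF0, htsumF0⟩ := kernel_moment_sum hMne hu₀
    obtain ⟨hsuma, htsuma⟩ := kernel_abs_sum_aux hC hν hu₀ hsumF0 htsumF0
    have hsumF : Summable (fun k : ℤ => |a k| * |(k : ℝ) - w * L| ^ ν) := by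
      rw [hlogu₀] at hsumF0; exact hsumF0
    have htsumF : ∑' k : ℤ, |a k| * |(k : ℝ) - w * L| ^ ν ≤ Mν := by
      rw [hlogu₀] at htsumF0; exact htsumF0
    have hpart : HasSum a 1 := hχ.partition u₀ hu₀
    set J : ℤ → ℝ := fun k => w * ∫ u in ((k : ℝ) / w)..(((k : ℝ) + 1) / w), g u with hJdef
    have hkanto : kanto χ f w t = ∑' k, a k * J k := rfl
    have hba : ∀ k : ℤ, ((k : ℝ) + 1) / w - (k : ℝ) / w = 1 / w := by
      intro k; field_simp; ring
    have hJb : ∀ k, |J k| ≤ Cf := by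
      intro k
      rw [hJdef]
      simp only []
      rw [abs_mul, abs_of_pos hw0]
      have h1 : ‖∫ u in ((k : ℝ) / w)..(((k : ℝ) + 1) / w), g u‖ ≤ Cf * |((k : ℝ) + 1) / w - (k : ℝ) / w| :=
        intervalIntegral.norm_integral_le_of_norm_le_const (fun x _ => by simpa using hg_bd x)
      rw [Real.norm_eq_abs, hba k, abs_of_pos (by positivity : (0:ℝ) < 1 / w)] at h1
      calc w * |∫ u in ((k : ℝ) / w)..(((k : ℝ) + 1) / w), g u| ≤ w * (Cf * (1 / w)) :=
            mul_le_mul_of_nonneg_left h1 hw0.le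
        _ = Cf := by field_simp
    have hJsub : ∀ k : ℤ, J k - ℓ = w * ∫ u in ((k : ℝ) / w)..(((k : ℝ) + 1) / w), (g u - ℓ) := by
      intro k
      rw [intervalIntegral.integral_sub (hgint _ _) intervalIntegrable_const,
        intervalIntegral.integral_const, hba k, smul_eq_mul, mul_sub]
      have : w * (1 / w * ℓ) = ℓ := by field_simp
      rw [this, hJdef]
    have hJnear : ∀ k : ℤ, |(k : ℝ) - w * L| < w * δ / 2 → |J k - ℓ| ≤ ε' := by
      intro k hk
      rw [hJsub k, abs_mul, abs_of_pos hw0]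
      have hae : ∀ᵐ x : ℝ, x ∈ Set.uIoc ((k : ℝ) / w) (((k : ℝ) + 1) / w) → ‖g x - ℓ‖ ≤ ε' := by
        have hL0 : ∀ᵐ x : ℝ, x ≠ L := by
          rw [ae_iff]
          simp only [not_not, Set.setOf_eq_eq_singleton]
          exact Real.volume_singleton
        filter_upwards [hL0] with x hx hmem
        rw [Real.norm_eq_abs]
        apply hsmall x hx
        have hle : (k : ℝ) / w ≤ ((k : ℝ) + 1) / w := by
          gcongr
          linarith
        have hIoc : x ∈ Ioc ((k : ℝ) / w) (((k : ℝ) + 1) / w) := by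
          rwa [Set.uIoc_of_le hle] at hmem
        have h1 : |(k : ℝ) / w - L| < δ / 2 := by
          have heq : (k : ℝ) / w - L = ((k : ℝ) - w * L) / w := by field_simp
          rw [heq, abs_div, abs_of_pos hw0, div_lt_div_iff₀ hw0 two_pos]
          calc |(k : ℝ) - w * L| * 2 < (w * δ / 2) * 2 := by linarith
            _ = δ * w := by ring
        have h2 : |x - L| < δ := by
          rw [abs_lt] at h1 ⊢
          have hx1 := hIoc.1
          have hx2 := hIoc.2
          have hsplit : ((k : ℝ) + 1) / w = (k : ℝ) / w + 1 / w := by ring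
          constructor
          · linarith [h1.1]
          · rw [hsplit] at hx2; linarith [h1.2]
        calc |x - L| < δ := h2
          _ < δ' := by rw [hδdef]; linarith
      have h1 := intervalIntegral.norm_integral_le_of_norm_le_const_ae hae
      rw [Real.norm_eq_abs, hba k, abs_of_pos (by positivity : (0:ℝ) < 1 / w)] at h1
      calc w * |∫ u in ((k : ℝ) / w)..(((k : ℝ) + 1) / w), (g u - ℓ)| ≤ w * (ε' * (1 / w)) :=
            mul_le_mul_of_nonneg_left h1 hw0.le
        _ = ε' := by field_simp
    set T : ℤ → ℝ := fun k => a k * (J k - ℓ) with hTdef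
    have hTabs : ∀ k, |T k| = |a k| * |J k - ℓ| := fun k => abs_mul _ _
    have hTabs_le : ∀ k, |T k| ≤ |a k| * B := by
      intro k
      rw [hTabs k]
      apply mul_le_mul_of_nonneg_left _ (abs_nonneg _)
      calc |J k - ℓ| ≤ |J k| + |ℓ| := by
            simpa [Real.norm_eq_abs] using norm_sub_le (J k) ℓ
        _ ≤ Cf + |ℓ| := by linarith [hJb k]
    have hsumTabs : Summable (fun k => |T k|) :=
      Summable.of_nonneg_of_le (fun k => abs_nonneg _) hTabs_le (hsuma.mul_right B)
    have hsumaJ : Summable (fun k => a k * J k) := by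
      apply Summable.of_abs
      apply Summable.of_nonneg_of_le (fun k => abs_nonneg _) _ (hsuma.mul_right Cf)
      intro k
      rw [abs_mul]
      exact mul_le_mul_of_nonneg_left (hJb k) (abs_nonneg _)
    have hsumaℓ : HasSum (fun k => a k * ℓ) ℓ := by simpa using hpart.mul_right ℓ
    have hdiff : kanto χ f w t - ℓ = ∑' k, T k := by
      rw [hkanto]
      rw [← hsumaℓ.tsum_eq]
      rw [← Summable.tsum_sub hsumaJ hsumaℓ.summable]
      congr 1; funext k; rw [hTdef]; ring
    have habs : |kanto χ f w t - ℓ| ≤ ∑' k, |T k| := by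
      rw [hdiff]
      simpa [Real.norm_eq_abs] using
        norm_tsum_le_tsum_norm (f := T) (by simpa [Real.norm_eq_abs] using hsumTabs)
    set P : Set ℤ := {k : ℤ | |(k : ℝ) - w * L| < w * δ / 2} with hPdef
    have hsplit : ∑' k, |T k| = (∑' k : P, |T k.1|) + ∑' k : ↥Pᶜ, |T k.1| :=
      (Summable.tsum_subtype_add_tsum_subtype_compl hsumTabs P).symm
    have hnear : ∑' k : P, |T k.1| ≤ ε' * m0 := by
      have h1 : ∑' k : P, |T k.1| ≤ ∑' k : P, ε' * |a k.1| := by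
        apply Summable.tsum_le_tsum _ (hsumTabs.subtype P) ((hsuma.mul_left ε').subtype P)
        intro k
        show |T k.1| ≤ ε' * |a k.1|
        rw [hTabs k.1, mul_comm ε' (|a k.1|)]
        exact mul_le_mul_of_nonneg_left (hJnear k.1 k.2) (abs_nonneg _)
      refine h1.trans ?_
      rw [tsum_mul_left]
      apply mul_le_mul_of_nonneg_left _ hε'.le
      exact (Summable.tsum_subtype_le (fun k : ℤ => |a k|) P (fun k => abs_nonneg _) hsuma).trans htsuma
    have hfar : ∑' k : ↥Pᶜ, |T k.1| ≤ B / (w * δ / 2) ^ ν * Mν := by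
      set c : ℝ := (w * δ / 2) ^ ν with hcdef
      have hwd2 : (0:ℝ) < w * δ / 2 := by positivity
      have hc0 : 0 < c := Real.rpow_pos_of_pos hwd2 ν
      have h1 : ∀ k : ↥Pᶜ, |T k.1| ≤ (B / c) * (|a k.1| * |(k.1 : ℝ) - w * L| ^ ν) := by
        intro k
        have hk : w * δ / 2 ≤ |(k.1 : ℝ) - w * L| := by
          have := k.2
          simp only [hPdef, Set.mem_compl_iff, Set.mem_setOf_eq, not_lt] at this
          exact this
        have h2 : c ≤ |(k.1 : ℝ) - w * L| ^ ν := Real.rpow_le_rpow hwd2.le hk hν.le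
        have h3 : |T k.1| ≤ |a k.1| * B := hTabs_le k.1
        rw [div_mul_eq_mul_div, le_div_iff₀ hc0]
        calc |T k.1| * c ≤ (|a k.1| * B) * c := mul_le_mul_of_nonneg_right h3 hc0.le
          _ ≤ B * (|a k.1| * |(k.1 : ℝ) - w * L| ^ ν) := by
              rw [mul_comm (|a k.1|) B, mul_assoc]
              exact mul_le_mul_of_nonneg_left
                (mul_le_mul_of_nonneg_left h2 (abs_nonneg _)) hBnn
      calc ∑' k : ↥Pᶜ, |T k.1|
          ≤ ∑' k : ↥Pᶜ, (B / c) * (|a k.1| * |(k.1 : ℝ) - w * L| ^ ν) :=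
            Summable.tsum_le_tsum h1 (hsumTabs.subtype _) ((hsumF.mul_left (B / c)).subtype _)
        _ = (B / c) * ∑' k : ↥Pᶜ, (|a k.1| * |(k.1 : ℝ) - w * L| ^ ν) := tsum_mul_left
        _ ≤ (B / c) * Mν := by
            apply mul_le_mul_of_nonneg_left _ (by positivity)
            exact (Summable.tsum_subtype_le (fun k : ℤ => |a k| * |(k : ℝ) - w * L| ^ ν) _
              (fun k => mul_nonneg (abs_nonneg _) (Real.rpow_nonneg (abs_nonneg _) ν)) hsumF).trans htsumF
    calc |kanto χ f w t - ℓ| ≤ ∑' k, |T k| := habs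
      _ = (∑' k : P, |T k.1|) + ∑' k : ↥Pᶜ, |T k.1| := hsplit
      _ ≤ ε' * m0 + B / (w * δ / 2) ^ ν * Mν := add_le_add hnear hfar
  -- finish
  have htendc : Tendsto (fun w : ℝ => B / (w * δ / 2) ^ ν * Mν) atTop (nhds 0) := by
    have h1 : Tendsto (fun w : ℝ => (w * δ / 2) ^ ν) atTop atTop := by
      apply (tendsto_rpow_atTop hν).comp
      have : Tendsto (fun w : ℝ => w * (δ / 2)) atTop atTop :=
        Tendsto.atTop_mul_const (by positivity) tendsto_id
      refine this.congr fun w => by ring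
    have h2 : Tendsto (fun w : ℝ => B / (w * δ / 2) ^ ν) atTop (nhds 0) :=
      tendsto_const_nhds.div_atTop h1
    simpa using h2.mul_const Mν
  have hev1 : ∀ᶠ w in atTop, B / (w * δ / 2) ^ ν * Mν < ε / 2 :=
    htendc.eventually (eventually_lt_nhds (by linarith))
  filter_upwards [hev1, eventually_ge_atTop (max (2 / δ) 1)] with w h1 h2
  rw [Real.dist_eq]
  have hkey := key w h2
  have hε'm0 : ε' * m0 < ε / 2 := by
    have heq : ε' * (m0 + 1) = ε / 2 := by
      rw [hε'def]; field_simp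
    nlinarith
  linarith
end

section
/- Let χ: ℝ⁺ → ℝ be a kernel with M_ν(χ) < +∞ for some 0 < ν < 1, and let f: ℝ⁺ → ℝ be a bounded log-uniformly continuous function. Then for every t ∈ ℝ⁺ and all sufficiently large w > 0, |(I_w^χ f)(t) − f(t)| ≤ ω(f, w^{−ν})·[M_ν(χ) + 2·M₀(χ)] + 2^{ν+1}·‖f‖_∞·M_ν(χ)·w^{−ν}. -/
open Real MeasureTheory Filter Set

/-- The logarithmic modulus of continuity
`ω(f, δ) = sup{|f(s) − f(t)| : s, t > 0, |log s − log t| ≤ δ}`. -/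
noncomputable def logModulus (f : ℝ → ℝ) (δ : ℝ) : ℝ :=
  sSup {y : ℝ | ∃ s : ℝ, 0 < s ∧ ∃ t : ℝ, 0 < t ∧
    |Real.log s - Real.log t| ≤ δ ∧ y = |f s - f t|}

section AuxLemmas

lemma aux_summable_and_le (χ : ℝ → ℝ) (p : ℝ) (hM : absMoment χ p ≠ ⊤)
    (u : ℝ) (hu : 0 < u) :
    Summable (fun k : ℤ => |χ (Real.exp (-(k : ℝ)) * u)| * |(k : ℝ) - Real.log u| ^ p) ∧
    ∑' k : ℤ, |χ (Real.exp (-(k : ℝ)) * u)| * |(k : ℝ) - Real.log u| ^ p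
      ≤ (absMoment χ p).toReal := by
  set F : ℤ → ℝ := fun k => |χ (Real.exp (-(k:ℝ)) * u)| * |(k:ℝ) - Real.log u| ^ p with hF
  have hF0 : ∀ k, 0 ≤ F k := fun k =>
    mul_nonneg (abs_nonneg _) (Real.rpow_nonneg (abs_nonneg _) _)
  have hle : ∑' k : ℤ, ENNReal.ofReal (F k) ≤ absMoment χ p :=
    le_iSup (fun v : {x : ℝ // 0 < x} => ∑' k : ℤ,
      ENNReal.ofReal (|χ (Real.exp (-(k:ℝ)) * v.1)| * |(k:ℝ) - Real.log v.1| ^ p))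
      (⟨u, hu⟩ : {x : ℝ // 0 < x})
  have hne : ∑' k : ℤ, ENNReal.ofReal (F k) ≠ ⊤ :=
    (lt_of_le_of_lt hle (lt_top_iff_ne_top.2 hM)).ne
  have heq : (fun k : ℤ => (ENNReal.ofReal (F k)).toReal) = F :=
    funext fun k => ENNReal.toReal_ofReal (hF0 k)
  have hsum : Summable F := heq ▸ ENNReal.summable_toReal hne
  refine ⟨hsum, ?_⟩
  have h2 : ∑' k, F k = (∑' k, ENNReal.ofReal (F k)).toReal := by
    rw [ENNReal.tsum_toReal_eq (fun a => ENNReal.ofReal_ne_top), heq]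
  rw [h2]
  exact ENNReal.toReal_mono hM hle

lemma aux_M0_lt_top (χ : ℝ → ℝ) (C : ℝ)
    (hC : ∀ u ∈ Set.Icc (Real.exp (-1)) (Real.exp 1), |χ u| ≤ C)
    (ν : ℝ) (hν0 : 0 < ν) (hMν : absMoment χ ν < ⊤) :
    absMoment χ 0 < ⊤ := by
  have key : ∀ u : {x : ℝ // 0 < x},
      (∑' k : ℤ, ENNReal.ofReal
          (|χ (Real.exp (-(k:ℝ)) * u.1)| * |(k:ℝ) - Real.log u.1| ^ (0:ℝ)))
        ≤ ENNReal.ofReal C + ENNReal.ofReal (2 ^ ν) * absMoment χ ν := by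
    rintro ⟨u, hu⟩
    simp only [Real.rpow_zero, mul_one]
    set a := Real.log u with ha
    set g : ℤ → ℝ := fun k => |χ (Real.exp (-(k:ℝ)) * u)| with hg
    set k0 : ℤ := round a with hk0
    rw [ENNReal.tsum_eq_add_tsum_ite (f := fun k : ℤ => ENNReal.ofReal (g k)) k0]
    have hpart1 : ENNReal.ofReal (g k0) ≤ ENNReal.ofReal C := by
      apply ENNReal.ofReal_le_ofReal
      have hxu : Real.exp (-(k0:ℝ)) * u = Real.exp (a - k0) := by
        rw [← Real.exp_log hu, ← ha, ← Real.exp_add]; ring_nf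
      rw [hg]; simp only; rw [hxu]
      apply hC
      have h12 : |a - (k0:ℝ)| ≤ 1/2 := by rw [hk0]; exact abs_sub_round a
      rw [abs_le] at h12
      constructor
      · apply Real.exp_le_exp.2; linarith
      · apply Real.exp_le_exp.2; linarith
    have hpart2 : (∑' k : ℤ, if k = k0 then 0 else ENNReal.ofReal (g k))
        ≤ ENNReal.ofReal (2 ^ ν) * absMoment χ ν := by
      have hterm : ∀ k : ℤ, (if k = k0 then 0 else ENNReal.ofReal (g k))
          ≤ ENNReal.ofReal (2 ^ ν) * ENNReal.ofReal (g k * |(k:ℝ) - a| ^ ν) := by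
        intro k
        by_cases hk : k = k0
        · simp [hk]
        · simp only [hk, if_false]
          rw [← ENNReal.ofReal_mul (by positivity)]
          apply ENNReal.ofReal_le_ofReal
          have hdist : (1:ℝ)/2 ≤ |(k:ℝ) - a| := by
            have h1 : (1:ℝ) ≤ |(k:ℝ) - (k0:ℝ)| := by
              have hne : k - k0 ≠ 0 := sub_ne_zero.2 hk
              have := Int.one_le_abs hne
              calc (1:ℝ) = ((1:ℤ):ℝ) := by norm_num
              _ ≤ ((|k - k0| : ℤ) : ℝ) := by exact_mod_cast this
              _ = |(k:ℝ) - (k0:ℝ)| := by push_cast; rfl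
            have h2 : |a - (k0:ℝ)| ≤ 1/2 := abs_sub_round a
            have h3 : |(k:ℝ) - (k0:ℝ)| ≤ |(k:ℝ) - a| + |a - (k0:ℝ)| := abs_sub_le _ _ _
            linarith
          have hone : (1:ℝ) ≤ 2 ^ ν * |(k:ℝ) - a| ^ ν := by
            rw [← Real.mul_rpow (by norm_num) (abs_nonneg _)]
            apply Real.one_le_rpow (by linarith) hν0.le
          calc g k = g k * 1 := (mul_one _).symm
          _ ≤ g k * (2 ^ ν * |(k:ℝ) - a| ^ ν) :=
              mul_le_mul_of_nonneg_left hone (abs_nonneg _)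
          _ = 2 ^ ν * (g k * |(k:ℝ) - a| ^ ν) := by ring
      calc (∑' k : ℤ, if k = k0 then 0 else ENNReal.ofReal (g k))
          ≤ ∑' k : ℤ, ENNReal.ofReal (2 ^ ν) * ENNReal.ofReal (g k * |(k:ℝ) - a| ^ ν) :=
            ENNReal.tsum_le_tsum hterm
      _ = ENNReal.ofReal (2 ^ ν) * ∑' k : ℤ, ENNReal.ofReal (g k * |(k:ℝ) - a| ^ ν) :=
            ENNReal.tsum_mul_left
      _ ≤ ENNReal.ofReal (2 ^ ν) * absMoment χ ν := by
            gcongr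
            exact le_iSup (fun v : {x : ℝ // 0 < x} => ∑' k : ℤ,
              ENNReal.ofReal (|χ (Real.exp (-(k:ℝ)) * v.1)| * |(k:ℝ) - Real.log v.1| ^ ν))
              (⟨u, hu⟩ : {x : ℝ // 0 < x})
    refine add_le_add hpart1 (le_trans (le_of_eq ?_) hpart2)
    exact tsum_congr fun k => by by_cases h : k = k0 <;> simp [h]
  calc absMoment χ 0 ≤ ENNReal.ofReal C + ENNReal.ofReal (2 ^ ν) * absMoment χ ν :=
        iSup_le key
  _ < ⊤ := by
      apply ENNReal.add_lt_top.2
      exact ⟨ENNReal.ofReal_lt_top, ENNReal.mul_lt_top ENNReal.ofReal_lt_top hMν⟩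

lemma logModulus_le (f : ℝ → ℝ) (C : ℝ) (hfb : ∀ x : ℝ, 0 < x → |f x| ≤ C) {δ : ℝ}
    {s t : ℝ} (hs : 0 < s) (ht : 0 < t) (h : |Real.log s - Real.log t| ≤ δ) :
    |f s - f t| ≤ logModulus f δ := by
  apply le_csSup
  · refine ⟨2 * C, ?_⟩
    rintro y ⟨s', hs', t', ht', -, rfl⟩
    calc |f s' - f t'| ≤ |f s'| + |f t'| := abs_sub _ _
    _ ≤ C + C := add_le_add (hfb _ hs') (hfb _ ht')
    _ = 2 * C := by ring
  · exact ⟨s, hs, t, ht, h, rfl⟩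

lemma logModulus_nonneg (f : ℝ → ℝ) (C : ℝ) (hfb : ∀ x : ℝ, 0 < x → |f x| ≤ C) {δ : ℝ}
    (hδ : 0 ≤ δ) : 0 ≤ logModulus f δ := by
  have := logModulus_le f C hfb (δ := δ) one_pos one_pos (by simpa using hδ)
  simpa using this

lemma logModulus_chain (f : ℝ → ℝ) (C : ℝ) (hfb : ∀ x : ℝ, 0 < x → |f x| ≤ C)
    {δ : ℝ} (hδ : 0 < δ) {s t : ℝ} (hs : 0 < s) (ht : 0 < t) {d : ℝ}
    (hd : |Real.log s - Real.log t| ≤ d) :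
    |f s - f t| ≤ (1 + d / δ) * logModulus f δ := by
  have hω0 : 0 ≤ logModulus f δ := logModulus_nonneg f C hfb hδ.le
  have hd0 : 0 ≤ d := le_trans (abs_nonneg _) hd
  set n : ℕ := ⌈d / δ⌉₊ with hn
  rcases Nat.eq_zero_or_pos n with h0 | hpos
  · have hdd : d / δ ≤ 0 := Nat.ceil_eq_zero.1 h0
    have hdz : d = 0 := le_antisymm (by
      by_contra hcon
      push_neg at hcon
      have : 0 < d / δ := div_pos (lt_of_le_of_ne hd0 (Ne.symm (ne_of_gt hcon))) hδ
      linarith) hd0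
    subst hdz
    have hlog : Real.log s = Real.log t := by
      have := abs_nonpos_iff.1 hd
      linarith [sub_eq_zero.1 this]
    have hst : s = t := by
      rw [← Real.exp_log hs, ← Real.exp_log ht, hlog]
    simp [hst]
    positivity
  · set L := Real.log s - Real.log t with hL
    set F : ℕ → ℝ := fun i => f (Real.exp (Real.log t + i * (L / n))) with hF
    have hn0 : (n:ℝ) ≠ 0 := Nat.cast_ne_zero.2 hpos.ne'
    have hF0 : F 0 = f t := by simp [hF, Real.exp_log ht]
    have hFn : F n = f s := by
      have h1 : Real.log t + (n:ℝ) * (L / n) = Real.log s := by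
        field_simp [hL]
        linarith
      rw [hF]; simp only [h1]; rw [Real.exp_log hs]
    have hstep : ∀ i : ℕ, |F (i+1) - F i| ≤ logModulus f δ := by
      intro i
      apply logModulus_le f C hfb (Real.exp_pos _) (Real.exp_pos _)
      rw [Real.log_exp, Real.log_exp]
      have heq : Real.log t + ((i:ℝ)+1) * (L / n) - (Real.log t + (i:ℝ) * (L / n)) = L / n := by
        ring
      push_cast [Nat.cast_succ]
      rw [heq, abs_div, Nat.abs_cast n]
      rw [div_le_iff₀ (by positivity)]
      have h1 : |L| ≤ d := hd
      have h2 : d ≤ δ * n := by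
        rw [mul_comm, ← div_le_iff₀ hδ]
        exact Nat.le_ceil _
      linarith
    have htel : f s - f t = ∑ i ∈ Finset.range n, (F (i+1) - F i) := by
      rw [Finset.sum_range_sub, hF0, hFn]
    calc |f s - f t| = |∑ i ∈ Finset.range n, (F (i+1) - F i)| := by rw [htel]
    _ ≤ ∑ i ∈ Finset.range n, |F (i+1) - F i| := Finset.abs_sum_le_sum_abs _ _
    _ ≤ ∑ _i ∈ Finset.range n, logModulus f δ := Finset.sum_le_sum fun i _ => hstep i
    _ = (n:ℝ) * logModulus f δ := by rw [Finset.sum_const, Finset.card_range]; simp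
    _ ≤ (1 + d / δ) * logModulus f δ := by
        apply mul_le_mul_of_nonneg_right _ hω0
        have := Nat.ceil_lt_add_one (by positivity : (0:ℝ) ≤ d / δ)
        rw [hn]; push_cast; linarith

lemma aux_cont (f : ℝ → ℝ)
    (hluc : ∀ ε > 0, ∃ δ > 0, ∀ s > 0, ∀ t > 0,
      |Real.log s - Real.log t| < δ → |f s - f t| < ε) :
    Continuous (fun u : ℝ => f (Real.exp u)) := by
  rw [Metric.continuous_iff]
  intro x ε hε
  obtain ⟨δ, hδ, h⟩ := hluc ε hε
  refine ⟨δ, hδ, fun y hy => ?_⟩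
  have := h (Real.exp y) (Real.exp_pos _) (Real.exp x) (Real.exp_pos _)
    (by simpa [Real.log_exp, Real.dist_eq] using hy)
  simpa [Real.dist_eq] using this

end AuxLemmas

/-- Degree of approximation: for a kernel with `M_ν(χ) < ∞` (`0 < ν < 1`) and a bounded
log-uniformly continuous `f`, for all sufficiently large `w`,
`|I_w^χ f(t) − f(t)| ≤ ω(f, w^{−ν})[M_ν(χ) + 2M₀(χ)] + 2^{ν+1} ‖f‖_∞ M_ν(χ) w^{−ν}`. -/
theorem kanto_degree_of_approximation
    (χ f : ℝ → ℝ) (hχ : IsKernel χ) (ν : ℝ) (hν0 : 0 < ν) (hν1 : ν < 1)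
    (hMν : absMoment χ ν < ⊤)
    (hfb : ∃ C, ∀ x : ℝ, 0 < x → |f x| ≤ C)
    (hluc : ∀ ε > 0, ∃ δ > 0, ∀ s > 0, ∀ t > 0,
      |Real.log s - Real.log t| < δ → |f s - f t| < ε) :
    ∃ W : ℝ, 0 < W ∧ ∀ w ≥ W, ∀ t : ℝ, 0 < t →
      |kanto χ f w t - f t| ≤
        logModulus f (w ^ (-ν)) * ((absMoment χ ν).toReal + 2 * (absMoment χ 0).toReal)
        + 2 ^ (ν + 1) * (⨆ x : {x : ℝ // 0 < x}, |f x.1|)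
            * (absMoment χ ν).toReal * w ^ (-ν) := by
  obtain ⟨C, hC⟩ := hfb
  obtain ⟨Cb, hCb⟩ := hχ.bounded
  have hM0top : absMoment χ 0 < ⊤ := aux_M0_lt_top χ Cb hCb ν hν0 hMν
  have hcont : Continuous (fun u : ℝ => f (Real.exp u)) := aux_cont f hluc
  have hbdd : BddAbove (Set.range fun x : {x : ℝ // 0 < x} => |f x.1|) :=
    ⟨C, by rintro y ⟨x, rfl⟩; exact hC x.1 x.2⟩
  refine ⟨1, one_pos, fun w hw t ht => ?_⟩
  have hw0 : 0 < w := lt_of_lt_of_le one_pos hw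
  simp only [kanto]
  set Cs : ℝ := ⨆ x : {x : ℝ // 0 < x}, |f x.1| with hCsdef
  have hfCs : ∀ x : ℝ, 0 < x → |f x| ≤ Cs := fun x hx =>
    le_ciSup hbdd (⟨x, hx⟩ : {x : ℝ // 0 < x})
  have hCs0 : 0 ≤ Cs := le_trans (abs_nonneg (f 1)) (hfCs 1 one_pos)
  set δ : ℝ := w ^ (-ν) with hδdef
  have hδ : 0 < δ := Real.rpow_pos_of_pos hw0 _
  set u0 : ℝ := t ^ w with hu0def
  have hu0 : 0 < u0 := Real.rpow_pos_of_pos ht w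
  set M : ℝ := (absMoment χ ν).toReal with hMdef
  set M0 : ℝ := (absMoment χ 0).toReal with hM0def
  set a : ℝ := Real.log u0 with hadef
  have haw : a = w * Real.log t := by rw [hadef, hu0def, Real.log_rpow ht]
  set g : ℤ → ℝ := fun k => |χ (Real.exp (-(k:ℝ)) * u0)| with hgdef
  set q : ℤ → ℝ := fun k => |(k:ℝ) - a| ^ ν with hqdef
  have hg0 : ∀ k, 0 ≤ g k := fun k => abs_nonneg _
  have hq0 : ∀ k, 0 ≤ q k := fun k => Real.rpow_nonneg (abs_nonneg _) _
  obtain ⟨hqsum, hqle⟩ := aux_summable_and_le χ ν hMν.ne u0 hu0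
  obtain ⟨hg0sum, hg0le⟩ := aux_summable_and_le χ 0 hM0top.ne u0 hu0
  simp only [Real.rpow_zero, mul_one] at hg0sum hg0le
  -- restate in terms of g, q
  have hqsum' : Summable (fun k : ℤ => g k * q k) := hqsum
  have hqle' : ∑' k : ℤ, g k * q k ≤ M := hqle
  have hg0sum' : Summable g := hg0sum
  have hg0le' : ∑' k : ℤ, g k ≤ M0 := hg0le
  have hω0 : 0 ≤ logModulus f δ := logModulus_nonneg f C hC hδ.le
  set ω : ℝ := logModulus f δ with hωdef
  set c2 : ℝ := 2 ^ (ν+1) * Cs * δ with hc2def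
  have h2ν1 : (0:ℝ) < 2 ^ (ν+1) := Real.rpow_pos_of_pos (by norm_num) _
  have hc20 : 0 ≤ c2 := by rw [hc2def]; positivity
  -- integral interval facts
  have hIk : ∀ k : ℤ, IntervalIntegrable (fun u => f (Real.exp u)) MeasureTheory.volume
      ((k:ℝ)/w) (((k:ℝ)+1)/w) := fun k => hcont.intervalIntegrable _ _
  have hlek : ∀ k : ℤ, (k:ℝ)/w ≤ ((k:ℝ)+1)/w := by
    intro k
    rw [div_le_div_iff_of_pos_right hw0]  -- may not exist; fallback below
    linarith
  have hkey : ∀ (k : ℤ) (B : ℝ),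
      (∀ u ∈ Set.Icc ((k:ℝ)/w) (((k:ℝ)+1)/w), |f (Real.exp u) - f t| ≤ B) →
      |w * (∫ u in ((k:ℝ)/w)..(((k:ℝ)+1)/w), f (Real.exp u)) - f t| ≤ B := by
    intro k B hB
    have heq1 : w * (∫ u in ((k:ℝ)/w)..(((k:ℝ)+1)/w), f (Real.exp u)) - f t
        = w * (∫ u in ((k:ℝ)/w)..(((k:ℝ)+1)/w), (f (Real.exp u) - f t)) := by
      rw [intervalIntegral.integral_sub (hIk k) intervalIntegrable_const,
        intervalIntegral.integral_const]
      have h2 : ((k:ℝ)+1)/w - (k:ℝ)/w = 1/w := by field_simp; ring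
      rw [h2, smul_eq_mul]
      field_simp
    rw [heq1, abs_mul, abs_of_pos hw0]
    have h3 : ‖∫ u in ((k:ℝ)/w)..(((k:ℝ)+1)/w), (f (Real.exp u) - f t)‖
        ≤ B * |(((k:ℝ)+1)/w) - ((k:ℝ)/w)| := by
      apply intervalIntegral.norm_integral_le_of_norm_le_const
      intro x hx
      rw [Set.uIoc_of_le (hlek k)] at hx
      rw [Real.norm_eq_abs]
      exact hB x ⟨hx.1.le, hx.2⟩
    rw [Real.norm_eq_abs] at h3
    have h4 : |(((k:ℝ)+1)/w) - ((k:ℝ)/w)| = 1/w := by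
      rw [show (((k:ℝ)+1)/w) - ((k:ℝ)/w) = 1/w by field_simp; ring]
      exact abs_of_pos (by positivity)
    rw [h4] at h3
    calc w * |∫ u in ((k:ℝ)/w)..(((k:ℝ)+1)/w), (f (Real.exp u) - f t)|
        ≤ w * (B * (1/w)) := mul_le_mul_of_nonneg_left h3 hw0.le
    _ = B := by field_simp
  have hdist : ∀ (k : ℤ) (u : ℝ), u ∈ Set.Icc ((k:ℝ)/w) (((k:ℝ)+1)/w) →
      |u - Real.log t| ≤ (|(k:ℝ) - a| + 1) / w := by
    intro k u hu
    obtain ⟨h1, h2⟩ := hu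
    have e1 : (k:ℝ) ≤ u * w := (div_le_iff₀ hw0).1 h1
    have e2 : u * w ≤ (k:ℝ) + 1 := (le_div_iff₀ hw0).1 h2
    have habs : |u * w - a| ≤ |(k:ℝ) - a| + 1 :=
      abs_le.2 ⟨by linarith [neg_abs_le ((k:ℝ) - a)], by linarith [le_abs_self ((k:ℝ) - a)]⟩
    have heqd : u - Real.log t = (u * w - a)/w := by rw [haw]; field_simp
    rw [heqd, abs_div, abs_of_pos hw0]
    gcongr
  have hB2 : ∀ (k : ℤ), ∀ u ∈ Set.Icc ((k:ℝ)/w) (((k:ℝ)+1)/w),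
      |f (Real.exp u) - f t| ≤ Cs + Cs := by
    intro k u _
    calc |f (Real.exp u) - f t| ≤ |f (Real.exp u)| + |f t| := abs_sub _ _
    _ ≤ Cs + Cs := add_le_add (hfCs _ (Real.exp_pos u)) (hfCs t ht)
  have hTb : ∀ k : ℤ, |w * (∫ u in ((k:ℝ)/w)..(((k:ℝ)+1)/w), f (Real.exp u)) - f t|
      ≤ Cs + Cs := fun k => hkey k _ (hB2 k)
  -- termwise bound
  have hterm : ∀ k : ℤ,
      |χ (Real.exp (-(k:ℝ)) * u0) *
        (w * (∫ u in ((k:ℝ)/w)..(((k:ℝ)+1)/w), f (Real.exp u)) - f t)|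
        ≤ ω * (2 * g k + g k * q k) + c2 * (g k * q k) := by
    intro k
    rw [abs_mul]
    by_cases hcase : |(k:ℝ) - a| ≤ w
    · -- near case
      have hchain : ∀ u ∈ Set.Icc ((k:ℝ)/w) (((k:ℝ)+1)/w),
          |f (Real.exp u) - f t| ≤ (1 + ((|(k:ℝ) - a| + 1)/w) / δ) * ω := by
        intro u hu
        have := logModulus_chain f C hC hδ (Real.exp_pos u) ht
          (d := (|(k:ℝ) - a| + 1)/w) (by rw [Real.log_exp]; exact hdist k u hu)
        exact this
      have h5 := hkey k _ hchain
      have hwpow : w * δ = w ^ (1 - ν) := by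
        rw [hδdef, show (1:ℝ) - ν = 1 + (-ν) by ring, Real.rpow_add hw0, Real.rpow_one]
      have hinv : w ^ (ν - 1) = (w ^ ((1:ℝ) - ν))⁻¹ := by
        rw [show ν - 1 = -(1 - ν) by ring, Real.rpow_neg hw0.le]
      have e1 : ((|(k:ℝ) - a| + 1)/w) / δ = (|(k:ℝ) - a| + 1) * w ^ (ν - 1) := by
        rw [div_div, hwpow, hinv, div_eq_mul_inv]
      have hw1 : (1:ℝ) ≤ w := hw
      have hwν1 : w ^ (ν - 1) ≤ 1 :=
        Real.rpow_le_one_of_one_le_of_nonpos hw1 (by linarith)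
      have hwν0 : 0 ≤ w ^ (ν - 1) := Real.rpow_nonneg hw0.le _
      have hsplit : |(k:ℝ) - a| * w ^ (ν - 1) ≤ q k := by
        have hxsplit : |(k:ℝ) - a| = q k * |(k:ℝ) - a| ^ (1 - ν) := by
          rw [hqdef]
          rw [← Real.rpow_add' (abs_nonneg _) (by norm_num : ν + (1 - ν) ≠ 0)]
          norm_num
        have hle2 : |(k:ℝ) - a| ^ ((1:ℝ) - ν) ≤ w ^ ((1:ℝ) - ν) :=
          Real.rpow_le_rpow (abs_nonneg _) hcase (by linarith)
        have hcancel : w ^ ((1:ℝ) - ν) * w ^ (ν - 1) = 1 := by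
          rw [← Real.rpow_add hw0]
          norm_num
        calc |(k:ℝ) - a| * w ^ (ν - 1) = q k * (|(k:ℝ) - a| ^ ((1:ℝ) - ν) * w ^ (ν - 1)) := by
              conv_lhs => rw [hxsplit]
              ring
        _ ≤ q k * (w ^ ((1:ℝ) - ν) * w ^ (ν - 1)) := by
              apply mul_le_mul_of_nonneg_left _ (hq0 k)
              exact mul_le_mul_of_nonneg_right hle2 hwν0
        _ = q k := by rw [hcancel, mul_one]
      have h6 : 1 + ((|(k:ℝ) - a| + 1)/w) / δ ≤ 2 + q k := by
        rw [e1]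
        have : (|(k:ℝ) - a| + 1) * w ^ (ν - 1)
            = |(k:ℝ) - a| * w ^ (ν - 1) + w ^ (ν - 1) := by ring
        rw [this]
        linarith
      calc g k * |w * (∫ u in ((k:ℝ)/w)..(((k:ℝ)+1)/w), f (Real.exp u)) - f t|
          ≤ g k * ((1 + ((|(k:ℝ) - a| + 1)/w) / δ) * ω) :=
            mul_le_mul_of_nonneg_left h5 (hg0 k)
      _ ≤ g k * ((2 + q k) * ω) := by
            apply mul_le_mul_of_nonneg_left _ (hg0 k)
            exact mul_le_mul_of_nonneg_right h6 hω0
      _ = ω * (2 * g k + g k * q k) := by ring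
      _ ≤ ω * (2 * g k + g k * q k) + c2 * (g k * q k) :=
            le_add_of_nonneg_right (mul_nonneg hc20 (mul_nonneg (hg0 k) (hq0 k)))
    · -- far case
      push_neg at hcase
      have hone : (1:ℝ) ≤ δ * q k := by
        have hr : (1:ℝ) ≤ |(k:ℝ) - a| / w := (one_le_div hw0).2 hcase.le
        have := Real.one_le_rpow hr hν0.le
        have hdiv : (|(k:ℝ) - a| / w) ^ ν = q k * δ := by
          rw [Real.div_rpow (abs_nonneg _) hw0.le, hδdef,
            Real.rpow_neg hw0.le, hqdef, div_eq_mul_inv]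
        rw [hdiv] at this
        linarith [this]
      have h5 := hTb k
      calc g k * |w * (∫ u in ((k:ℝ)/w)..(((k:ℝ)+1)/w), f (Real.exp u)) - f t|
          ≤ g k * (Cs + Cs) := mul_le_mul_of_nonneg_left h5 (hg0 k)
      _ = 2 * Cs * (g k * 1) := by ring
      _ ≤ 2 * Cs * (g k * (δ * q k)) := by
            apply mul_le_mul_of_nonneg_left _ (by positivity)
            exact mul_le_mul_of_nonneg_left hone (hg0 k)
      _ = (2 * Cs * δ) * (g k * q k) := by ring
      _ ≤ c2 * (g k * q k) := by
            apply mul_le_mul_of_nonneg_right _ (mul_nonneg (hg0 k) (hq0 k))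
            rw [hc2def]
            have h22 : (2:ℝ) ≤ 2 ^ (ν + 1) := by
              calc (2:ℝ) = 2 ^ (1:ℝ) := (Real.rpow_one 2).symm
              _ ≤ 2 ^ (ν + 1) := by
                  apply Real.rpow_le_rpow_of_exponent_le (by norm_num)
                  linarith
            nlinarith [hCs0, hδ.le]
      _ ≤ ω * (2 * g k + g k * q k) + c2 * (g k * q k) := by
            apply le_add_of_nonneg_left
            have : 0 ≤ 2 * g k + g k * q k := by positivity
            positivity
  -- summabilities
  have hpart : HasSum (fun k : ℤ => χ (Real.exp (-(k:ℝ)) * u0)) 1 := hχ.partition u0 hu0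
  have hχT : Summable (fun k : ℤ => χ (Real.exp (-(k:ℝ)) * u0) *
      (w * (∫ u in ((k:ℝ)/w)..(((k:ℝ)+1)/w), f (Real.exp u)) - f t)) := by
    apply Summable.of_norm_bounded (hg0sum'.mul_right (Cs + Cs))
    intro k
    rw [Real.norm_eq_abs, abs_mul]
    exact mul_le_mul_of_nonneg_left (hTb k) (hg0 k)
  have hχT2 : Summable (fun k : ℤ => χ (Real.exp (-(k:ℝ)) * u0) * f t) :=
    hpart.summable.mul_right (f t)
  have hχT3 : Summable (fun k : ℤ => χ (Real.exp (-(k:ℝ)) * u0) *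
      (w * ∫ u in ((k:ℝ)/w)..(((k:ℝ)+1)/w), f (Real.exp u))) := by
    have := hχT.add hχT2
    simpa [mul_sub, sub_add_cancel] using this
  have hft : ∑' k : ℤ, χ (Real.exp (-(k:ℝ)) * u0) * f t = f t := by
    rw [tsum_mul_right, hpart.tsum_eq, one_mul]
  have hmain : (∑' k : ℤ, χ (Real.exp (-(k:ℝ)) * u0) *
      (w * ∫ u in ((k:ℝ)/w)..(((k:ℝ)+1)/w), f (Real.exp u))) - f t
      = ∑' k : ℤ, χ (Real.exp (-(k:ℝ)) * u0) *
        (w * (∫ u in ((k:ℝ)/w)..(((k:ℝ)+1)/w), f (Real.exp u)) - f t) := by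
    conv_lhs => rw [← hft]
    rw [← Summable.tsum_sub hχT3 hχT2]
    exact tsum_congr fun k => by ring
  rw [hmain]
  have hbsum : Summable (fun k : ℤ => ω * (2 * g k + g k * q k) + c2 * (g k * q k)) :=
    (((hg0sum'.mul_left 2).add hqsum').mul_left ω).add (hqsum'.mul_left c2)
  have habs : Summable (fun k : ℤ => |χ (Real.exp (-(k:ℝ)) * u0) *
      (w * (∫ u in ((k:ℝ)/w)..(((k:ℝ)+1)/w), f (Real.exp u)) - f t)|) := hχT.abs
  calc |∑' k : ℤ, χ (Real.exp (-(k:ℝ)) * u0) *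
      (w * (∫ u in ((k:ℝ)/w)..(((k:ℝ)+1)/w), f (Real.exp u)) - f t)|
      ≤ ∑' k : ℤ, |χ (Real.exp (-(k:ℝ)) * u0) *
        (w * (∫ u in ((k:ℝ)/w)..(((k:ℝ)+1)/w), f (Real.exp u)) - f t)| := by
        have := norm_tsum_le_tsum_norm (f := fun k : ℤ => χ (Real.exp (-(k:ℝ)) * u0) *
          (w * (∫ u in ((k:ℝ)/w)..(((k:ℝ)+1)/w), f (Real.exp u)) - f t)) (by
            simpa only [Real.norm_eq_abs] using habs)
        simpa only [Real.norm_eq_abs] using this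
  _ ≤ ∑' k : ℤ, (ω * (2 * g k + g k * q k) + c2 * (g k * q k)) :=
        Summable.tsum_le_tsum hterm habs hbsum
  _ = ω * (2 * (∑' k : ℤ, g k) + ∑' k : ℤ, g k * q k) + c2 * ∑' k : ℤ, g k * q k := by
        rw [Summable.tsum_add (((hg0sum'.mul_left 2).add hqsum').mul_left ω) (hqsum'.mul_left c2),
          tsum_mul_left, tsum_mul_left, Summable.tsum_add (hg0sum'.mul_left 2) hqsum', tsum_mul_left]
  _ ≤ ω * (M + 2 * M0) + 2 ^ (ν + 1) * Cs * M * δ := by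
        have hS0 : 0 ≤ ∑' k : ℤ, g k := tsum_nonneg hg0
        have hS1 : 0 ≤ ∑' k : ℤ, g k * q k :=
          tsum_nonneg fun k => mul_nonneg (hg0 k) (hq0 k)
        have i1 : ω * (2 * (∑' k : ℤ, g k) + ∑' k : ℤ, g k * q k) ≤ ω * (M + 2 * M0) :=
          mul_le_mul_of_nonneg_left (by linarith) hω0
        have i2 : c2 * (∑' k : ℤ, g k * q k) ≤ c2 * M :=
          mul_le_mul_of_nonneg_left hqle' hc20
        have i3 : c2 * M = 2 ^ (ν + 1) * Cs * M * δ := by rw [hc2def]; ring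
        linarith
end
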